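/- arXiv:2312.17054 — 4 statements merged into one kernel-verified Lean document; each statement's English description precedes it below -/
import Mathlib

section
/- Let $d \ge 3$ be odd, $V = (\mathbb{C}^2)^{\otimes d}$, and let $\omega = \omega_{d,2} \in \bigwedge^2 V$ be the Cayley form. Then for every $n \in [0, 2^d - 2]$, the Lefschetz map $L: \bigwedge^n V \to \bigwedge^{n+2} V$, $v \mapsto \omega \wedge v$, has full rank (i.e., is injective if $n \le 2^{d-1} - 1$ and surjective if $n \ge 2^{d-1} - 1$). -/
open ExteriorAlgebra

noncomputable section

/-- The tensor space `(ℂ^k)^{⊗ d}` realized as functions on the cube `[k]^d`. -/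
abbrev Tens (d k : ℕ) : Type := (Fin d → Fin k) → ℂ

/-- The standard basis vector `e_𝐢` of the tensor space. -/
def eb {d k : ℕ} (i : Fin d → Fin k) : Tens d k := Pi.single i 1

/-- The action of a `d`-tuple of `k × k` matrices on the tensor space. -/
def matAct {d k : ℕ} (g : Fin d → Matrix (Fin k) (Fin k) ℂ) : Tens d k →ₗ[ℂ] Tens d k where
  toFun f := fun x => ∑ y : Fin d → Fin k, (∏ j, g j (x j) (y j)) * f y
  map_add' f₁ f₂ := by
    funext x
    simp [mul_add, Finset.sum_add_distrib]
  map_smul' c f := by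
    funext x
    simp [Finset.mul_sum, mul_left_comm]

/-- The induced action on the exterior algebra `⋀ (ℂ^k)^{⊗ d}`. -/
def extAct {d k : ℕ} (g : Fin d → Matrix (Fin k) (Fin k) ℂ) :
    ExteriorAlgebra ℂ (Tens d k) →ₐ[ℂ] ExteriorAlgebra ℂ (Tens d k) :=
  ExteriorAlgebra.map (matAct g)

/-- `v` is a weight vector of weight `lam` (a `d`-tuple of integer vectors, recorded as
natural numbers) for the action of `GL(k)^{× d}`. -/
def IsWeightVector {d k : ℕ} (lam : Fin d → Fin k → ℕ)
    (v : ExteriorAlgebra ℂ (Tens d k)) : Prop :=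
  ∀ a : Fin d → Fin k → ℂ,
    extAct (fun j => Matrix.diagonal (a j)) v = (∏ j, ∏ i, a j i ^ lam j i) • v

/-- A matrix is upper unitriangular (unipotent). -/
def IsUnipotent {k : ℕ} (g : Matrix (Fin k) (Fin k) ℂ) : Prop :=
  (∀ i, g i i = 1) ∧ ∀ i j : Fin k, j < i → g i j = 0

/-- `v` is a highest weight vector of weight `lam`: a nonzero weight vector invariant under
`U(k)^{× d}`. -/
def IsHWV {d k : ℕ} (lam : Fin d → Fin k → ℕ) (v : ExteriorAlgebra ℂ (Tens d k)) : Prop :=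
  v ≠ 0 ∧ IsWeightVector lam v ∧
    ∀ g : Fin d → Matrix (Fin k) (Fin k) ℂ, (∀ j, IsUnipotent (g j)) → extAct g v = v

/-- The highest weight space of weight `lam` in `⋀^n (ℂ^k)^{⊗ d}`: the weight-`lam`,
unipotent-invariant vectors of degree `n` (a submodule; highest weight vectors are its
nonzero elements). -/
def HWVspace (d k : ℕ) (lam : Fin d → Fin k → ℕ) (n : ℕ) :
    Submodule ℂ (ExteriorAlgebra ℂ (Tens d k)) where
  carrier := {v | v ∈ ⋀[ℂ]^n (Tens d k) ∧ IsWeightVector lam v ∧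
    ∀ g : Fin d → Matrix (Fin k) (Fin k) ℂ, (∀ j, IsUnipotent (g j)) → extAct g v = v}
  add_mem' := by
    rintro u v ⟨hu1, hu2, hu3⟩ ⟨hv1, hv2, hv3⟩
    refine ⟨Submodule.add_mem _ hu1 hv1, fun a => ?_, fun g hg => ?_⟩
    · simp [map_add, hu2 a, hv2 a, smul_add]
    · simp [map_add, hu3 g hg, hv3 g hg]
  zero_mem' := ⟨Submodule.zero_mem _, fun a => by simp [IsWeightVector], fun g hg => by simp⟩
  smul_mem' := by
    rintro c v ⟨hv1, hv2, hv3⟩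
    refine ⟨Submodule.smul_mem _ _ hv1, fun a => ?_, fun g hg => ?_⟩
    · rw [map_smul, hv2 a, smul_comm]
    · rw [map_smul, hv3 g hg]

/-- The generalized Kronecker coefficient `g(𝛌)` of a `d`-tuple of partitions of `m` with at
most `k` columns, given here in terms of the tuple `mu` of *conjugate* partitions
(`mu j = (λ^{(j)})'`, a weakly decreasing `k`-tuple): it is the dimension of the corresponding
highest weight space in `⋀^m (ℂ^k)^{⊗ d}`. -/
def kron (d k : ℕ) (mu : Fin d → Fin k → ℕ) (m : ℕ) : ℕ :=
  Module.finrank ℂ (HWVspace d k mu m)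

/-- The Cayley form `ω_{d,k} ∈ ⋀^k (ℂ^k)^{⊗ d}`. -/
def cayley (d k : ℕ) : ExteriorAlgebra ℂ (Tens d k) :=
  ∑ π : Fin d → Equiv.Perm (Fin k),
    ((∏ j, Equiv.Perm.sign (π j) : ℤˣ) : ℤ) •
      ExteriorAlgebra.ιMulti ℂ k (fun i => eb (fun j => π j i))

set_option maxHeartbeats 1000000

namespace CW
variable {d : ℕ}
abbrev EA (d : ℕ) := ExteriorAlgebra ℂ (Tens d 2)
def cmpl (x : Fin d → Fin 2) : Fin d → Fin 2 := fun j => x j + 1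
def sg (x : Fin d → Fin 2) : ℂ := ∏ j, (if x j = 0 then 1 else -1)
def dl (x : Fin d → Fin 2) : Module.Dual ℂ (Tens d 2) := LinearMap.proj x
def D (x : Fin d → Fin 2) : EA d →ₗ[ℂ] EA d := CliffordAlgebra.contractLeft (dl x)
lemma D_ι_mul (z : Fin d → Fin 2) (a : Tens d 2) (b : EA d) :
    D z (ι ℂ a * b) = dl z a • b - ι ℂ a * D z b :=
  CliffordAlgebra.contractLeft_ι_mul _ _ _
lemma D_algebraMap (z : Fin d → Fin 2) (r : ℂ) :
    D z (algebraMap ℂ (EA d) r) = 0 :=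
  CliffordAlgebra.contractLeft_algebraMap (Q := (0 : QuadraticForm ℂ (Tens d 2))) (dl z) r

-- membership lemmas
lemma ι_mem (v : Tens d 2) : ι ℂ v ∈ ⋀[ℂ]^1 (Tens d 2) := by
  rw [exteriorPower, pow_one]
  exact LinearMap.mem_range_self _ v

lemma mul_mem_pow {a b : ℕ} {x y : EA d} (hx : x ∈ ⋀[ℂ]^a (Tens d 2))
    (hy : y ∈ ⋀[ℂ]^b (Tens d 2)) : x * y ∈ ⋀[ℂ]^(a+b) (Tens d 2) := by
  rw [exteriorPower, pow_add]
  exact Submodule.mul_mem_mul hx hy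

lemma algebraMap_mem_pow (r : ℂ) : algebraMap ℂ (EA d) r ∈ ⋀[ℂ]^0 (Tens d 2) := by
  rw [exteriorPower, pow_zero]
  exact Submodule.mem_one.mpr ⟨r, rfl⟩

lemma D_zero_deg (z : Fin d → Fin 2) {x : EA d} (hx : x ∈ ⋀[ℂ]^0 (Tens d 2)) : D z x = 0 := by
  rw [exteriorPower, pow_zero] at hx
  obtain ⟨r, rfl⟩ := Submodule.mem_one.mp hx
  exact D_algebraMap z r

lemma D_mem (z : Fin d → Fin 2) {n : ℕ} {x : EA d} (hx : x ∈ ⋀[ℂ]^n (Tens d 2)) :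
    D z x ∈ ⋀[ℂ]^(n-1) (Tens d 2) := by
  rw [exteriorPower] at hx
  induction hx using Submodule.pow_induction_on_left' with
  | algebraMap r => rw [D_algebraMap]; exact Submodule.zero_mem _
  | add x y i hx hy ihx ihy => rw [map_add]; exact Submodule.add_mem _ ihx ihy
  | mem_mul m hm i x hx ih =>
      obtain ⟨v, rfl⟩ := hm
      simp only [Nat.succ_sub_one]
      rw [D_ι_mul]
      refine Submodule.sub_mem _ (Submodule.smul_mem _ _ hx) ?_
      cases i with
      | zero => rw [D_zero_deg z hx, mul_zero]; exact Submodule.zero_mem _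
      | succ i' =>
          have h2 := mul_mem_pow (ι_mem (d := d) v) ih
          rw [Nat.succ_sub_one] at h2
          rw [show i' + 1 = 1 + i' from Nat.add_comm _ _]
          exact h2

lemma euler {n : ℕ} {x : EA d} (hx : x ∈ ⋀[ℂ]^n (Tens d 2)) :
    ∑ z : Fin d → Fin 2, ι ℂ (eb z) * D z x = (n : ℂ) • x := by
  rw [exteriorPower] at hx
  induction hx using Submodule.pow_induction_on_left' with
  | algebraMap r => simp [D_algebraMap]
  | add x y i hx hy ihx ihy =>
      simp only [map_add, mul_add, Finset.sum_add_distrib, ihx, ihy, smul_add]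
  | mem_mul m hm i x hx ih =>
      obtain ⟨v, rfl⟩ := hm
      have hanti : ∀ a b : Tens d 2, ι ℂ a * ι ℂ b = -(ι ℂ b * ι ℂ a) := fun a b =>
        eq_neg_of_add_eq_zero_left (ι_add_mul_swap a b)
      have resolve : ∑ z : Fin d → Fin 2, dl z v • ι ℂ (eb z) = ι ℂ v := by
        simp only [← map_smul, ← map_sum]
        congr 1
        have : ∀ z : Fin d → Fin 2, v z • eb z = Pi.single z (v z) := by
          intro z
          rw [eb, ← Pi.single_smul, smul_eq_mul, mul_one]
        simp only [dl, LinearMap.proj_apply, this, Finset.univ_sum_single]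
      calc ∑ z : Fin d → Fin 2, ι ℂ (eb z) * D z (ι ℂ v * x)
          = ∑ z : Fin d → Fin 2,
              (dl z v • (ι ℂ (eb z) * x) + ι ℂ v * (ι ℂ (eb z) * D z x)) := by
            refine Finset.sum_congr rfl fun z _ => ?_
            rw [D_ι_mul, mul_sub, mul_smul_comm, ← mul_assoc, hanti (eb z) v,
              neg_mul, mul_assoc, sub_neg_eq_add]
        _ = (∑ z : Fin d → Fin 2, dl z v • ι ℂ (eb z)) * x
              + ι ℂ v * (∑ z : Fin d → Fin 2, ι ℂ (eb z) * D z x) := by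
            rw [Finset.sum_add_distrib, Finset.sum_mul, ← Finset.mul_sum]
            simp only [smul_mul_assoc]
        _ = ι ℂ v * x + (i : ℂ) • (ι ℂ v * x) := by rw [resolve, ih, mul_smul_comm]
        _ = ((i:ℕ)+1 : ℂ) • (ι ℂ v * x) := by rw [add_smul, one_smul, add_comm]
        _ = ((i+1 : ℕ) : ℂ) • (ι ℂ v * x) := by norm_cast

section
variable (hd : Odd d)

-- sg lemmas (proved in t1, re-add)
lemma sg_sq (x : Fin d → Fin 2) : sg x * sg x = 1 := by
  rw [sg, ← Finset.prod_mul_distrib]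
  apply Finset.prod_eq_one; intro j _; split <;> norm_num

lemma cmpl_cmpl (x : Fin d → Fin 2) : cmpl (cmpl x) = x := by
  funext j
  show x j + 1 + 1 = x j
  have : ∀ i : Fin 2, i + 1 + 1 = i := by decide
  exact this _

lemma cmpl_invol : Function.Involutive (cmpl (d := d)) := cmpl_cmpl

lemma sg_cmpl (hd : Odd d) (x : Fin d → Fin 2) : sg (cmpl x) = - sg x := by
  have h2 : ∀ i : Fin 2, (if i + 1 = 0 then (1:ℂ) else -1) = -1 * (if i = 0 then 1 else -1) := by
    intro i; fin_cases i
    · norm_num [show ((0:Fin 2)) + 1 = 1 from rfl, show (1:Fin 2) ≠ 0 from by decide]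
    · norm_num [show ((1:Fin 2)) + 1 = 0 from rfl, show (1:Fin 2) ≠ 0 from by decide]
  rw [sg, sg]
  calc ∏ j, (if cmpl x j = 0 then (1:ℂ) else -1)
      = ∏ j, (-1 * if x j = 0 then (1:ℂ) else -1) := Finset.prod_congr rfl fun j _ => h2 (x j)
    _ = (-1)^d * ∏ j, (if x j = 0 then (1:ℂ) else -1) := by
        rw [Finset.prod_mul_distrib, Finset.prod_const]; simp
    _ = - ∏ j, (if x j = 0 then (1:ℂ) else -1) := by rw [hd.neg_one_pow]; ring

lemma dl_eb (x y : Fin d → Fin 2) : dl x (eb y) = if x = y then 1 else 0 := by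
  simp [dl, eb, Pi.single_apply]

def Ω (d : ℕ) : EA d := ∑ x : Fin d → Fin 2, sg x • (ι ℂ (eb x) * ι ℂ (eb (cmpl x)))

lemma Ω_mem : Ω d ∈ ⋀[ℂ]^2 (Tens d 2) :=
  Submodule.sum_mem _ fun x _ =>
    Submodule.smul_mem _ _ (mul_mem_pow (ι_mem _) (ι_mem _))

lemma D_Ω_mul (hd : Odd d) (z : Fin d → Fin 2) (w : EA d) :
    D z (Ω d * w) = (2 * sg z) • (ι ℂ (eb (cmpl z)) * w) + Ω d * D z w := by
  have hterm : ∀ y : Fin d → Fin 2,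
      D z (sg y • (ι ℂ (eb y) * ι ℂ (eb (cmpl y))) * w)
        = (sg y * (if z = y then 1 else 0)) • (ι ℂ (eb (cmpl y)) * w)
          - (sg y * (if z = cmpl y then 1 else 0)) • (ι ℂ (eb y) * w)
          + sg y • (ι ℂ (eb y) * (ι ℂ (eb (cmpl y)) * D z w)) := by
    intro y
    rw [smul_mul_assoc, mul_assoc, map_smul, D_ι_mul z (eb y), D_ι_mul z (eb (cmpl y)),
      dl_eb, dl_eb]
    simp only [mul_sub, smul_sub, mul_smul_comm, smul_smul, smul_add]
    module
  have expand : Ω d * w = ∑ y : Fin d → Fin 2, sg y • (ι ℂ (eb y) * ι ℂ (eb (cmpl y))) * w := by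
    rw [Ω, Finset.sum_mul]
  rw [expand, map_sum]
  simp only [hterm]
  rw [Finset.sum_add_distrib, Finset.sum_sub_distrib]
  have h1 : ∑ y : Fin d → Fin 2, (sg y * (if z = y then 1 else 0)) • (ι ℂ (eb (cmpl y)) * w)
      = sg z • (ι ℂ (eb (cmpl z)) * w) := by
    rw [Finset.sum_congr rfl (fun y _ => by
      rw [mul_ite, mul_one, mul_zero, ite_smul, zero_smul])]
    rw [Finset.sum_ite_eq]
    simp
  have h2 : ∑ y : Fin d → Fin 2, (sg y * (if z = cmpl y then 1 else 0)) • (ι ℂ (eb y) * w)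
      = -(sg z • (ι ℂ (eb (cmpl z)) * w)) := by
    rw [← Equiv.sum_comp (cmpl_invol (d := d)).toPerm
      (fun y => (sg y * (if z = cmpl y then 1 else 0)) • (ι ℂ (eb y) * w))]
    have key : ∀ y : Fin d → Fin 2,
        (sg (cmpl y) * (if z = cmpl (cmpl y) then 1 else 0)) • (ι ℂ (eb (cmpl y)) * w)
          = if z = y then sg (cmpl y) • (ι ℂ (eb (cmpl y)) * w) else 0 := by
      intro y
      rw [cmpl_cmpl, mul_ite, mul_one, mul_zero, ite_smul, zero_smul]
    refine (Finset.sum_congr rfl (fun y _ => key y)).trans ?_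
    rw [Finset.sum_ite_eq]
    simp only [Finset.mem_univ, if_true, sg_cmpl hd, neg_smul]
  have h3 : ∑ y : Fin d → Fin 2, sg y • (ι ℂ (eb y) * (ι ℂ (eb (cmpl y)) * D z w))
      = Ω d * D z w := by
    rw [Ω, Finset.sum_mul]
    exact Finset.sum_congr rfl fun y _ => by rw [smul_mul_assoc, mul_assoc]
  rw [h1, h2, h3, sub_neg_eq_add, ← two_smul ℂ, smul_smul]

def fop (d : ℕ) : EA d →ₗ[ℂ] EA d :=
  ∑ x : Fin d → Fin 2, (-(sg x)/4) • ((D x).comp (D (cmpl x)))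

lemma fop_apply (v : EA d) :
    fop d v = ∑ x : Fin d → Fin 2, (-(sg x)/4) • D x (D (cmpl x) v) := by
  rw [fop, LinearMap.sum_apply]
  exact Finset.sum_congr rfl fun x _ => by rw [LinearMap.smul_apply, LinearMap.comp_apply]

def euOp (d : ℕ) (v : EA d) : EA d := ∑ z : Fin d → Fin 2, ι ℂ (eb z) * D z v

lemma master (hd : Odd d) (v : EA d) :
    fop d (Ω d * v)
      = ((2^(d-1) : ℕ) : ℂ) • v - euOp d v + Ω d * fop d v := by
  have coeff1 : ∀ x : Fin d → Fin 2, -(sg x)/4 * (2 * -sg x) = 1/2 := by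
    intro x
    have h := sg_sq x
    calc -(sg x)/4 * (2 * -sg x) = (sg x * sg x) / 2 := by ring
      _ = 1/2 := by rw [h]
  have coeff2 : ∀ x : Fin d → Fin 2, -(sg x)/4 * (2 * sg x) = -(1/2) := by
    intro x
    have h := sg_sq x
    calc -(sg x)/4 * (2 * sg x) = -((sg x * sg x) / 2) := by ring
      _ = -(1/2) := by rw [h]
  have step : ∀ x : Fin d → Fin 2, D x (D (cmpl x) (Ω d * v))
      = (2 * -sg x) • v + (2 * sg x) • (ι ℂ (eb x) * D x v)
        + (2 * sg x) • (ι ℂ (eb (cmpl x)) * D (cmpl x) v)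
        + Ω d * D x (D (cmpl x) v) := by
    intro x
    rw [D_Ω_mul hd (cmpl x) v, cmpl_cmpl, map_add, map_smul, D_ι_mul, dl_eb,
      D_Ω_mul hd x (D (cmpl x) v), sg_cmpl hd]
    simp only [eq_self_iff_true, if_true, smul_sub]
    module
  rw [fop_apply]
  simp only [step, smul_add, smul_smul]
  rw [Finset.sum_add_distrib, Finset.sum_add_distrib, Finset.sum_add_distrib]
  have s1 : ∑ x : Fin d → Fin 2, (-(sg x)/4 * (2 * -sg x)) • v
      = ((2^(d-1) : ℕ) : ℂ) • v := by
    rw [Finset.sum_congr rfl (fun x _ => by rw [coeff1 x])]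
    rw [Finset.sum_const, Finset.card_univ]
    have hcard : Fintype.card (Fin d → Fin 2) = 2^d := by
      simp [Fintype.card_fun]
    rw [hcard, ← Nat.cast_smul_eq_nsmul ℂ, smul_smul]
    congr 1
    have hd1 : 1 ≤ d := hd.pos
    have : (2:ℕ)^d = 2^(d-1) * 2 := by
      rw [← pow_succ]
      congr 1
      omega
    rw [this]
    push_cast
    ring
  have s2 : ∑ x : Fin d → Fin 2, (-(sg x)/4 * (2 * sg x)) • (ι ℂ (eb x) * D x v)
      = (-(1/2) : ℂ) • euOp d v := by
    rw [euOp, Finset.smul_sum]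
    exact Finset.sum_congr rfl fun x _ => by rw [coeff2 x]
  have s3 : ∑ x : Fin d → Fin 2, (-(sg x)/4 * (2 * sg x)) • (ι ℂ (eb (cmpl x)) * D (cmpl x) v)
      = (-(1/2) : ℂ) • euOp d v := by
    rw [← Equiv.sum_comp (cmpl_invol (d := d)).toPerm
      (fun x => (-(sg x)/4 * (2 * sg x)) • (ι ℂ (eb (cmpl x)) * D (cmpl x) v))]
    simp only [Function.Involutive.coe_toPerm, cmpl_cmpl]
    rw [euOp, Finset.smul_sum]
    refine Finset.sum_congr rfl fun x _ => ?_
    rw [show -(sg (cmpl x))/4 * (2 * sg (cmpl x)) = -(sg x)/4 * (2 * sg x) by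
      rw [sg_cmpl hd]; ring, coeff2 x]
  have s4 : ∑ x : Fin d → Fin 2, (-(sg x)/4) • (Ω d * D x (D (cmpl x) v))
      = Ω d * fop d v := by
    rw [fop_apply, Finset.mul_sum]
    exact Finset.sum_congr rfl fun x _ => by rw [mul_smul_comm]
  rw [s1, s2, s3, s4]
  module

lemma comm_rel (hd : Odd d) {n : ℕ} {v : EA d} (hv : v ∈ ⋀[ℂ]^n (Tens d 2)) :
    fop d (Ω d * v) = (((2^(d-1) : ℕ) : ℂ) - (n : ℂ)) • v + Ω d * fop d v := by
  have he : euOp d v = (n : ℂ) • v := euler hv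
  rw [master hd v, he, sub_smul]

lemma fop_mem {n : ℕ} {v : EA d} (hv : v ∈ ⋀[ℂ]^n (Tens d 2)) :
    fop d v ∈ ⋀[ℂ]^(n-2) (Tens d 2) := by
  rw [fop_apply]
  refine Submodule.sum_mem _ fun x _ => Submodule.smul_mem _ _ ?_
  have h := D_mem x (D_mem (cmpl x) hv)
  rwa [show n - 1 - 1 = n - 2 by omega] at h

lemma fop_low {n : ℕ} {v : EA d} (hv : v ∈ ⋀[ℂ]^n (Tens d 2)) (hn : n ≤ 1) : fop d v = 0 := by
  rw [fop_apply]
  apply Finset.sum_eq_zero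
  intro x _
  match n, hn with
  | 0, _ => rw [D_zero_deg (cmpl x) hv, map_zero, smul_zero]
  | 1, _ =>
      have h0 : D (cmpl x) v ∈ ⋀[ℂ]^0 (Tens d 2) := D_mem (cmpl x) hv
      rw [D_zero_deg x h0, smul_zero]

lemma top_vanish {p : ℕ} (hp : 2^d < p) {x : EA d} (hx : x ∈ ⋀[ℂ]^p (Tens d 2)) : x = 0 := by
  have hspan := ιMulti_span_fixedDegree ℂ p (M := Tens d 2)
  rw [← hspan] at hx
  have hrange : Set.range (ιMulti ℂ p (M := Tens d 2)) ⊆ {0} := by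
    rintro _ ⟨v, rfl⟩
    have hdep : ¬ LinearIndependent ℂ v := by
      intro h
      have hle := h.fintype_card_le_finrank
      rw [Fintype.card_fin] at hle
      have hfr : Module.finrank ℂ (Tens d 2) = 2^d := by
        rw [Module.finrank_pi]
        simp [Fintype.card_fun]
      omega
    exact Set.mem_singleton_iff.mpr ((ιMulti ℂ p).map_linearDependent v hdep)
  have : x ∈ Submodule.span ℂ ({0} : Set (EA d)) :=
    Submodule.span_mono hrange hx
  rwa [Submodule.span_zero_singleton, Submodule.mem_bot] at this


lemma Ω_inj (hd : Odd d) {n : ℕ} (hn : n + 1 ≤ 2^(d-1)) {v : EA d}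
    (hv : v ∈ ⋀[ℂ]^n (Tens d 2)) (h0 : Ω d * v = 0) : v = 0 := by
  classical
  by_contra hne
  have iter_mem : ∀ k : ℕ, ((fop d)^k) v ∈ ⋀[ℂ]^(n - 2*k) (Tens d 2) := by
    intro k
    induction k with
    | zero => simpa using hv
    | succ k ih =>
        have h := fop_mem ih
        rw [pow_succ', Module.End.mul_apply]
        rwa [show n - 2*k - 2 = n - 2*(k+1) by omega] at h
  have exists_zero : ((fop d)^(n/2+1)) v = 0 := by
    rw [pow_succ', Module.End.mul_apply]
    exact fop_low (iter_mem (n/2)) (by omega)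
  have hP : ∃ k, ((fop d)^k) v = 0 := ⟨n/2+1, exists_zero⟩
  set K := Nat.find hP with hKdef
  have hK : ((fop d)^K) v = 0 := Nat.find_spec hP
  have hKpos : K ≠ 0 := by
    intro h
    rw [h, pow_zero, Module.End.one_apply] at hK
    exact hne hK
  have hKle : K ≤ n/2 + 1 := Nat.find_min' hP exists_zero
  have hmin : ((fop d)^(K-1)) v ≠ 0 := Nat.find_min hP (by omega)
  have CL : ∀ k : ℕ, 2*k ≤ n →
      Ω d * ((fop d)^(k+1)) v
        = (-(((k+1 : ℕ)) : ℂ) * (((2^(d-1) : ℕ) : ℂ) - (n : ℕ) + (k : ℕ))) •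
            ((fop d)^k) v := by
    intro k
    induction k with
    | zero =>
        intro _
        have h := comm_rel hd hv
        rw [h0, map_zero] at h
        have h2 : Ω d * fop d v
            = -((((2^(d-1) : ℕ) : ℂ) - (n : ℂ)) • v) :=
          eq_neg_of_add_eq_zero_right h.symm
        rw [pow_one, pow_zero, Module.End.one_apply, h2, ← neg_smul]
        congr 1
        push_cast
        ring
    | succ k ihk =>
        intro h2k
        have hk' : 2*k ≤ n := by omega
        have hx := iter_mem (k+1)
        have hcomm := comm_rel hd hx
        have hL : fop d (Ω d * ((fop d)^(k+1)) v)
            = (-(((k+1 : ℕ)) : ℂ) * (((2^(d-1) : ℕ) : ℂ) - (n : ℕ) + (k : ℕ))) •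
                ((fop d)^(k+1)) v := by
          rw [ihk hk', map_smul, ← Module.End.mul_apply, ← pow_succ']
        rw [hL] at hcomm
        have hfx : fop d (((fop d)^(k+1)) v) = ((fop d)^(k+2)) v := by
          rw [← Module.End.mul_apply, ← pow_succ']
        rw [hfx] at hcomm
        have hcast : ((n - 2*(k+1) : ℕ) : ℂ) = (n : ℂ) - 2*(k:ℂ) - 2 := by
          have : (n : ℂ) = ((n - 2*(k+1) : ℕ) : ℂ) + ((2*(k+1) : ℕ) : ℂ) := by
            rw [← Nat.cast_add]
            congr 1
            omega
          rw [this]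
          push_cast
          ring
        have := eq_sub_of_add_eq' hcomm.symm
        rw [this]
        rw [← sub_smul]
        congr 1
        rw [hcast]
        push_cast
        ring
  have h2K : 2*(K-1) ≤ n := by omega
  have hfinal := CL (K-1) h2K
  rw [show K - 1 + 1 = K by omega, hK, mul_zero] at hfinal
  have hcne : (-((K : ℕ) : ℂ) * (((2^(d-1) : ℕ) : ℂ) - (n : ℕ) + ((K-1 : ℕ)))) ≠ 0 := by
    apply mul_ne_zero
    · simp only [neg_ne_zero, Nat.cast_ne_zero]
      omega
    · intro h
      have hcast : (((2^(d-1) + (K-1) : ℕ)) : ℂ) = ((n : ℕ) : ℂ) := by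
        rw [Nat.cast_add]
        linear_combination h
      rw [Nat.cast_inj] at hcast
      omega
  have := (smul_eq_zero.mp hfinal.symm).resolve_left hcne
  exact hmin this

lemma eig (hd : Odd d) :
    ∀ t p : ℕ, 2^d ≤ p + 2*t → 2^(d-1) ≤ p + 2 → ∀ lam : ℂ, ∀ x : EA d,
      x ∈ ⋀[ℂ]^p (Tens d 2) → x ≠ 0 → fop d (Ω d * x) = lam • x →
      ∃ j : ℤ, lam = (j : ℂ) ∧ (j = 0 ∨ (p : ℤ) + 2 - ((2^(d-1) : ℕ) : ℤ) ≤ j) := by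
  intro t
  induction t with
  | zero =>
      intro p hpt _ lam x hx hxne heig
      have hΩx : Ω d * x ∈ ⋀[ℂ]^(2+p) (Tens d 2) := mul_mem_pow Ω_mem hx
      have hz : Ω d * x = 0 := top_vanish (by omega) hΩx
      rw [hz, map_zero] at heig
      have : lam = 0 := by
        rcases smul_eq_zero.mp heig.symm with h | h
        · exact h
        · exact absurd h hxne
      exact ⟨0, by simp [this], Or.inl rfl⟩
  | succ t ih =>
      intro p hpt hp2 lam x hx hxne heig
      by_cases hlam : lam = 0
      · exact ⟨0, by simp [hlam], Or.inl rfl⟩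
      · set y := Ω d * x with hy_def
        have hy : y ∈ ⋀[ℂ]^(p+2) (Tens d 2) := by
          have := mul_mem_pow Ω_mem hx
          rwa [Nat.add_comm] at this
        have hyne : y ≠ 0 := by
          intro h
          rw [h, map_zero] at heig
          rcases smul_eq_zero.mp heig.symm with h' | h'
          · exact hlam h'
          · exact hxne h'
        have heig2 : fop d (Ω d * y) = (lam + ((2^(d-1):ℕ) : ℂ) - (p:ℂ) - 2) • y := by
          have hcomm := comm_rel hd hy
          have hfy : Ω d * fop d y = lam • y := by
            rw [hy_def, heig, mul_smul_comm]
          rw [hfy] at hcomm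
          rw [hcomm, ← add_smul]
          congr 1
          simp only [Nat.cast_add, Nat.cast_ofNat]
          ring
        obtain ⟨j', hj', hcond⟩ := ih (p+2) (by omega) (by omega) _ y hy hyne heig2
        refine ⟨j' + (p:ℤ) + 2 - ((2^(d-1):ℕ) : ℤ), ?_, ?_⟩
        · have hlam' : lam = (j' : ℂ) + ((2^(d-1):ℕ) : ℂ) * 0 - ((2^(d-1):ℕ) : ℂ) + (p:ℂ) + 2
              - ((2^(d-1):ℕ) : ℂ) * 0 := by
            linear_combination hj'
          rw [hlam']
          push_cast
          ring
        · right
          rcases hcond with h | h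
          · generalize (2^(d-1) : ℕ) = M at h ⊢
            omega
          · have hple : (2^(d-1) : ℕ) ≤ p + 2 := hp2
            generalize (2^(d-1) : ℕ) = M at h hple ⊢
            omega

lemma Ω_surj (hd : Odd d) {n : ℕ} (hm : 2^(d-1) ≤ n + 1) {u : EA d}
    (hu : u ∈ ⋀[ℂ]^(n+2) (Tens d 2)) :
    ∃ v ∈ ⋀[ℂ]^n (Tens d 2), Ω d * v = u := by
  set P := ⋀[ℂ]^(n+2) (Tens d 2) with hPdef
  have hFGrange : Submodule.FG (LinearMap.range (ι ℂ : Tens d 2 →ₗ[ℂ] EA d)) :=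
    Module.Finite.iff_fg.mp (Module.Finite.range _)
  have hFG : Submodule.FG P := hFGrange.pow _
  haveI : Module.Finite ℂ ↥P := Module.Finite.iff_fg.mpr hFG
  let L : EA d →ₗ[ℂ] EA d := (LinearMap.mulLeft ℂ (Ω d)).comp (fop d)
  have hmaps : ∀ x ∈ P, L x ∈ P := by
    intro x hx
    have h1 : fop d x ∈ ⋀[ℂ]^n (Tens d 2) := by
      have := fop_mem hx
      rwa [show n + 2 - 2 = n by omega] at this
    have h2 := mul_mem_pow Ω_mem h1
    rw [Nat.add_comm] at h2
    simpa [L, LinearMap.mulLeft_apply] using h2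
  let G : ↥P →ₗ[ℂ] ↥P := L.restrict hmaps
  have hinj : Function.Injective G := by
    rw [← LinearMap.ker_eq_bot]
    rw [eq_bot_iff]
    rintro ⟨z, hz⟩ hker
    rw [Submodule.mem_bot]
    have hGz : L z = 0 := by
      have := congrArg Subtype.val (LinearMap.mem_ker.mp hker)
      simpa [G, LinearMap.restrict_apply] using this
    have hLz : Ω d * fop d z = 0 := by
      simpa [L, LinearMap.mulLeft_apply] using hGz
    simp only [Submodule.mk_eq_zero]
    by_contra hzne
    have hcomm := comm_rel hd hz
    rw [hLz, add_zero] at hcomm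
    obtain ⟨j, hj, hcond⟩ := eig hd (2^d) (n+2) (by omega) (by omega) _ z hz hzne hcomm
    have hjval : j = ((2^(d-1):ℕ) : ℤ) - ((n:ℤ) + 2) := by
      have h1 : (j : ℂ) = ((((2^(d-1):ℕ) : ℤ) - ((n:ℤ) + 2) : ℤ) : ℂ) := by
        rw [Int.cast_sub, Int.cast_natCast, Int.cast_add, Int.cast_natCast]
        have h2 : (((n+2 : ℕ)) : ℂ) = (n : ℂ) + 2 := by
          rw [Nat.cast_add]; norm_num
        rw [← hj, h2]
        ring
      exact_mod_cast h1
    have hmle : (2^(d-1) : ℕ) ≤ n + 1 := hm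
    rcases hcond with h | h <;>
      · generalize (2^(d-1) : ℕ) = M at h hjval hmle ⊢
        omega
  have hsurj := (LinearMap.injective_iff_surjective).mp hinj
  obtain ⟨w, hw⟩ := hsurj ⟨u, hu⟩
  refine ⟨fop d w.1, ?_, ?_⟩
  · have := fop_mem w.2
    rwa [show n + 2 - 2 = n by omega] at this
  · have := congrArg Subtype.val hw
    simpa [G, L, LinearMap.restrict_apply, LinearMap.mulLeft_apply] using this


lemma ιMulti_two (v : Fin 2 → Tens d 2) : ιMulti ℂ 2 v = ι ℂ (v 0) * ι ℂ (v 1) := by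
  rw [ιMulti_succ_apply, ιMulti_succ_apply, ιMulti_zero_apply, mul_one]
  rfl

def e2 : Fin 2 ≃ Equiv.Perm (Fin 2) where
  toFun i := if i = 0 then 1 else Equiv.swap 0 1
  invFun π := π 0
  left_inv := by decide
  right_inv := by decide

lemma e2_apply_zero (i : Fin 2) : e2 i 0 = i := by revert i; decide
lemma e2_apply_one (i : Fin 2) : e2 i 1 = i + 1 := by revert i; decide
lemma sign_e2 (i : Fin 2) :
    ((Equiv.Perm.sign (e2 i) : ℤ) : ℂ) = (if i = 0 then 1 else -1) := by
  fin_cases i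
  · simp [e2]
  · norm_num [e2, Equiv.Perm.sign_swap, show (0 : Fin 2) ≠ 1 from by decide,
      show (1 : Fin 2) ≠ 0 from by decide]

lemma term_eq (x : Fin d → Fin 2) :
    ((∏ j, Equiv.Perm.sign (e2 (x j)) : ℤˣ) : ℤ) •
        (ιMulti ℂ 2 (fun i : Fin 2 => eb (d := d) (fun j => e2 (x j) i)))
      = sg x • (ι ℂ (eb x) * ι ℂ (eb (cmpl x))) := by
  have hv : (fun i : Fin 2 => eb (d := d) (fun j => e2 (x j) i)) = ![eb x, eb (cmpl x)] := by
    funext i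
    fin_cases i
    · show eb (fun j => e2 (x j) 0) = eb x
      have h : (fun j => e2 (x j) 0) = x := funext fun j => e2_apply_zero (x j)
      rw [h]
    · show eb (fun j => e2 (x j) 1) = eb (cmpl x)
      have h : (fun j => e2 (x j) 1) = cmpl x := funext fun j => e2_apply_one (x j)
      rw [h]
  have hsc : (((∏ j, Equiv.Perm.sign (e2 (x j)) : ℤˣ) : ℤ) : ℂ) = sg x := by
    push_cast
    rw [sg]
    exact Finset.prod_congr rfl fun j _ => sign_e2 (x j)
  rw [← Int.cast_smul_eq_zsmul ℂ, hv, hsc, ιMulti_two]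
  simp only [Matrix.cons_val_zero, Matrix.cons_val_one, Matrix.head_cons]

lemma cayley_eq (d : ℕ) : cayley d 2 = Ω d := by
  rw [cayley, Ω]
  refine (Fintype.sum_equiv (Equiv.piCongrRight (fun _ : Fin d => e2))
    (fun x => sg x • (ι ℂ (eb x) * ι ℂ (eb (cmpl x))))
    (fun π => ((∏ j, Equiv.Perm.sign (π j) : ℤˣ) : ℤ) •
      ExteriorAlgebra.ιMulti ℂ 2 (fun i => eb (fun j => π j i))) ?_).symm
  intro x
  exact (term_eq x).symm

end
end CW

/-- For odd `d ≥ 3` the Lefschetz map `L : ⋀ⁿ V → ⋀^{n+2} V`, `v ↦ ω ∧ v`,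
with `V = (ℂ²)^{⊗d}` and `ω = ω_{d,2}` the Cayley form, has full rank for every
`n ∈ [0, 2^d - 2]`: it is injective for `n ≤ 2^{d-1} - 1` and surjective for
`n ≥ 2^{d-1} - 1`. -/
theorem lefschetz_full_rank_k2 (d : ℕ) (hd : Odd d) (hd3 : 3 ≤ d)
    (n : ℕ) (hn : n ≤ 2 ^ d - 2) :
    (n + 1 ≤ 2 ^ (d - 1) →
      ∀ v ∈ ⋀[ℂ]^n (Tens d 2), cayley d 2 * v = 0 → v = 0) ∧
    (2 ^ (d - 1) ≤ n + 1 →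
      ∀ u ∈ ⋀[ℂ]^(n + 2) (Tens d 2),
        ∃ v ∈ ⋀[ℂ]^n (Tens d 2), cayley d 2 * v = u) := by
  constructor
  · intro h1 v hv h0
    exact CW.Ω_inj hd h1 hv (by rwa [CW.cayley_eq] at h0)
  · intro h2 u hu
    obtain ⟨v, hv, hΩ⟩ := CW.Ω_surj hd h2 hu
    exact ⟨v, hv, by rwa [CW.cayley_eq]⟩

end
end

section
/- Let $d \ge 3$ be odd, $V_n = (\mathbb{C}^n)^{\otimes d}$, and let $\pmb{\lambda}$ be a $d$-tuple of partitions each contained in the rectangle $k^{d-1} \times k$. Suppose the map $L_k: \mathrm{HWV}_{\pmb{\lambda}'} \bigwedge V_k \to \mathrm{HWV}_{(\rho_k \pmb{\lambda})'} \bigwedge V_k$, $v \mapsto \omega_{d,k} \wedge v$, is injective. Then for every $\ell > k$, the map $L_\ell: \mathrm{HWV}_{\pmb{\lambda}'} \bigwedge V_\ell \to \mathrm{HWV}_{(\rho_\ell \pmb{\lambda})'} \bigwedge V_\ell$, $v \mapsto \omega_{d,\ell} \wedge v$, is also injective. -/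
open ExteriorAlgebra

noncomputable section

section ContractionLemmas

open CliffordAlgebra

variable {M : Type*} [AddCommGroup M] [Module ℂ M]
variable {N : Type*} [AddCommGroup N] [Module ℂ N]

theorem SI.contract_mul (δ : Module.Dual ℂ M) (x : ExteriorAlgebra ℂ M) :
    ∀ y : ExteriorAlgebra ℂ M,
      contractLeft (Q := (0 : QuadraticForm ℂ M)) δ (x * y) =
        contractLeft (Q := (0 : QuadraticForm ℂ M)) δ x * y +
          involute x * contractLeft (Q := (0 : QuadraticForm ℂ M)) δ y := by
  induction x using CliffordAlgebra.induction with
  | algebraMap r =>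
      intro y
      rw [contractLeft_algebraMap_mul, contractLeft_algebraMap, AlgHom.commutes, zero_mul,
        zero_add]
  | ι m =>
      intro y
      rw [contractLeft_ι_mul, contractLeft_ι, involute_ι, Algebra.algebraMap_eq_smul_one,
        smul_mul_assoc, one_mul, neg_mul, sub_eq_add_neg]
  | mul a b ha hb =>
      intro y
      rw [mul_assoc, ha (b * y), hb y, ha b, map_mul]
      simp only [mul_assoc, mul_add, add_mul]
      abel
  | add a b ha hb =>
      intro y
      rw [add_mul, map_add, map_add, map_add, ha y, hb y, add_mul, add_mul]
      abel

theorem SI.contract_map_zero (δ : Module.Dual ℂ N) (f : M →ₗ[ℂ] N)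
    (hf : ∀ w, δ (f w) = 0) (x : ExteriorAlgebra ℂ M) :
    contractLeft (Q := (0 : QuadraticForm ℂ N)) δ (ExteriorAlgebra.map f x) = 0 := by
  induction x using CliffordAlgebra.induction with
  | algebraMap r => rw [AlgHom.commutes, contractLeft_algebraMap]
  | ι m => rw [ExteriorAlgebra.map_apply_ι, contractLeft_ι, hf, map_zero]
  | mul a b ha hb => rw [map_mul, SI.contract_mul, ha, hb, zero_mul, mul_zero, add_zero]
  | add a b ha hb => rw [map_add, map_add, ha, hb, add_zero]

/-- Contraction of an `ιMulti`. -/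
theorem SI.contract_ιMulti (δ : Module.Dual ℂ M) :
    ∀ (n : ℕ) (v : Fin (n + 1) → M),
      contractLeft (Q := (0 : QuadraticForm ℂ M)) δ (ιMulti ℂ (n + 1) v) =
        ∑ i : Fin (n + 1), ((-1 : ℂ) ^ (i : ℕ) * δ (v i)) •
          ιMulti ℂ n (fun j => v (i.succAbove j)) := by
  intro n
  induction n with
  | zero =>
      intro v
      rw [ιMulti_succ_apply, contractLeft_ι_mul]
      simp [ιMulti_zero_apply, contractLeft_one]
  | succ n ih =>
      intro v
      rw [ιMulti_succ_apply, contractLeft_ι_mul, ih (Matrix.vecTail v), Finset.mul_sum,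
        sub_eq_add_neg, ← Finset.sum_neg_distrib]
      conv_rhs => rw [Fin.sum_univ_succ]
      congr 1
      · simp [Matrix.vecTail, Function.comp_def]
      · refine Finset.sum_congr rfl fun i _ => ?_
        have h1 : ιMulti ℂ (n + 1) (fun j => v ((Fin.succ i).succAbove j)) =
            ι ℂ (v 0) * ιMulti ℂ n (fun j => Matrix.vecTail v (i.succAbove j)) := by
          rw [ιMulti_succ_apply]
          congr 1
          · refine congrArg _ (funext fun j => ?_)
            simp [Matrix.vecTail, Function.comp_def, Fin.succ_succAbove_succ]
        rw [mul_smul_comm, ← neg_smul, h1]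
        congr 1
        simp only [Matrix.vecTail, Function.comp_def, Fin.val_succ, pow_succ]
        ring

end ContractionLemmas
set_option synthInstance.maxHeartbeats 1000000
set_option maxHeartbeats 1600000

namespace SI

variable {d k : ℕ}

/-- Restriction of tensors from level `k+1` to level `k`. -/
def resT (d k : ℕ) : Tens d (k + 1) →ₗ[ℂ] Tens d k where
  toFun f := fun x => f (fun j => (x j).castSucc)
  map_add' f g := rfl
  map_smul' c f := rfl

/-- Inclusion of tensors from level `k` to level `k+1`. -/
def incT (d k : ℕ) : Tens d k →ₗ[ℂ] Tens d (k + 1) where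
  toFun f := fun x => if h : ∀ j, (x j : ℕ) < k then f (fun j => ⟨x j, h j⟩) else 0
  map_add' f g := by
    funext x
    by_cases h : ∀ j, (x j : ℕ) < k <;> simp [h]
  map_smul' c f := by
    funext x
    by_cases h : ∀ j, (x j : ℕ) < k <;> simp [h]

theorem resT_incT : (resT d k).comp (incT d k) = LinearMap.id := by
  refine LinearMap.ext fun f => ?_
  funext x
  have h : ∀ j, (((x j).castSucc : Fin (k + 1)) : ℕ) < k := fun j => (x j).isLt
  simp only [LinearMap.comp_apply, LinearMap.id_apply, resT, incT, LinearMap.coe_mk,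
    AddHom.coe_mk, dif_pos h]
  congr 1

theorem incT_eb (x : Fin d → Fin k) : incT d k (eb x) = eb (fun j => (x j).castSucc) := by
  funext y
  simp only [incT, eb, LinearMap.coe_mk, AddHom.coe_mk, Pi.single_apply]
  by_cases h : ∀ j, (y j : ℕ) < k
  · rw [dif_pos h]
    by_cases he : y = fun j => (x j).castSucc
    · have h1 : (fun j => (⟨y j, h j⟩ : Fin k)) = x := by
        funext j; exact Fin.ext (by simp [he])
      rw [if_pos h1, if_pos he]
    · have h1 : ¬ (fun j => (⟨y j, h j⟩ : Fin k)) = x := by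
        intro hc
        exact he (funext fun j => by
          have := congrFun hc j
          exact Fin.ext (by simpa [Fin.ext_iff] using this))
      rw [if_neg h1, if_neg he]
  · rw [dif_neg h]
    have h1 : ¬ y = fun j => (x j).castSucc := by
      intro hc
      exact h (fun j => by rw [hc]; exact (x j).isLt)
    rw [if_neg h1]

theorem resT_eb_of (x : Fin d → Fin (k + 1)) (h : ∀ j, (x j : ℕ) < k) :
    resT d k (eb x) = eb (fun j => ⟨x j, h j⟩) := by
  funext y
  simp only [resT, eb, LinearMap.coe_mk, AddHom.coe_mk, Pi.single_apply]
  by_cases he : (fun j => (y j).castSucc) = x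
  · have h1 : y = fun j => (⟨x j, h j⟩ : Fin k) := by
      funext j
      exact Fin.ext (by simp [← he])
    rw [if_pos he, if_pos h1]
  · have h1 : ¬ y = fun j => (⟨x j, h j⟩ : Fin k) := by
      intro hc
      exact he (funext fun j => Fin.ext (by simp [hc]))
    rw [if_neg he, if_neg h1]

theorem resT_eb_zero (x : Fin d → Fin (k + 1)) (h : ¬ ∀ j, (x j : ℕ) < k) :
    resT d k (eb x) = 0 := by
  funext y
  simp only [resT, eb, LinearMap.coe_mk, AddHom.coe_mk, Pi.single_apply, Pi.zero_apply]
  have h1 : ¬ (fun j => (y j).castSucc) = x := by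
    intro hc
    exact h (fun j => by rw [← hc]; exact (y j).isLt)
  rw [if_neg h1]

/-- The induced algebra maps. -/
abbrev resA (d k : ℕ) : ExteriorAlgebra ℂ (Tens d (k + 1)) →ₐ[ℂ] ExteriorAlgebra ℂ (Tens d k) :=
  ExteriorAlgebra.map (resT d k)

abbrev incA (d k : ℕ) : ExteriorAlgebra ℂ (Tens d k) →ₐ[ℂ] ExteriorAlgebra ℂ (Tens d (k + 1)) :=
  ExteriorAlgebra.map (incT d k)

theorem resA_incA (x : ExteriorAlgebra ℂ (Tens d k)) : resA d k (incA d k x) = x := by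
  have h := ExteriorAlgebra.map_comp_map (incT d k) (resT d k)
  rw [resT_incT] at h
  have h2 := DFunLike.congr_fun (h.trans ExteriorAlgebra.map_id) x
  simpa only [AlgHom.comp_apply, AlgHom.id_apply] using h2

/-- Commutation of `matAct` with restriction, for block matrices. -/
theorem matAct_res {g : Fin d → Matrix (Fin k) (Fin k) ℂ}
    {G : Fin d → Matrix (Fin (k + 1)) (Fin (k + 1)) ℂ}
    (H1 : ∀ j (x y : Fin k), G j x.castSucc y.castSucc = g j x y)
    (H2 : ∀ j (x : Fin k) (y : Fin (k + 1)), ¬ ((y : ℕ) < k) → G j x.castSucc y = 0) :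
    (resT d k).comp (matAct G) = (matAct g).comp (resT d k) := by
  refine LinearMap.ext fun f => ?_
  funext x
  simp only [LinearMap.comp_apply, resT, LinearMap.coe_mk, AddHom.coe_mk, matAct]
  classical
  set e : (Fin d → Fin k) → (Fin d → Fin (k + 1)) := fun y j => (y j).castSucc with he
  have hinj : Function.Injective e := by
    intro a b hab
    funext j
    exact Fin.castSucc_injective _ (congrFun hab j)
  calc ∑ y : Fin d → Fin (k + 1), (∏ j, G j ((x j).castSucc) (y j)) * f y
      = ∑ y ∈ Finset.image e Finset.univ, (∏ j, G j ((x j).castSucc) (y j)) * f y := by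
        refine (Finset.sum_subset (Finset.subset_univ _) ?_).symm
        intro y _ hy
        have h : ¬ ∀ j, ((y j : ℕ)) < k := by
          intro hall
          exact hy (Finset.mem_image.2 ⟨fun j => ⟨y j, hall j⟩, Finset.mem_univ _,
            funext fun j => Fin.ext rfl⟩)
        push_neg at h
        obtain ⟨j0, hj0⟩ := h
        refine mul_eq_zero_of_left (Finset.prod_eq_zero (Finset.mem_univ j0) ?_) _
        exact H2 j0 (x j0) (y j0) (not_lt.mpr hj0)
    _ = ∑ y : Fin d → Fin k, (∏ j, G j ((x j).castSucc) ((e y) j)) * f (e y) :=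
        Finset.sum_image (fun a _ b _ hab => hinj hab)
    _ = ∑ y : Fin d → Fin k, (∏ j, g j (x j) (y j)) * f (fun j => (y j).castSucc) := by
        refine Finset.sum_congr rfl fun y _ => ?_
        exact congrArg₂ _ (Finset.prod_congr rfl fun j _ => H1 j (x j) (y j)) rfl

theorem extAct_res {g : Fin d → Matrix (Fin k) (Fin k) ℂ}
    {G : Fin d → Matrix (Fin (k + 1)) (Fin (k + 1)) ℂ}
    (H1 : ∀ j (x y : Fin k), G j x.castSucc y.castSucc = g j x y)
    (H2 : ∀ j (x : Fin k) (y : Fin (k + 1)), ¬ ((y : ℕ) < k) → G j x.castSucc y = 0)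
    (v : ExteriorAlgebra ℂ (Tens d (k + 1))) :
    resA d k (extAct G v) = extAct g (resA d k v) := by
  have h1 := ExteriorAlgebra.map_comp_map (matAct G) (resT d k)
  have h2 := ExteriorAlgebra.map_comp_map (resT d k) (matAct g)
  rw [matAct_res H1 H2] at h1
  have h3 := DFunLike.congr_fun (h1.trans h2.symm) v
  simp only [AlgHom.comp_apply] at h3
  exact h3

end SI
namespace SI

variable {d k : ℕ}

theorem matAct_proj :
    matAct (fun _ : Fin d => Matrix.diagonal (fun i : Fin (k + 1) =>
        if (i : ℕ) < k then (1 : ℂ) else 0)) = (incT d k).comp (resT d k) := by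
  refine LinearMap.ext fun f => ?_
  funext x
  simp only [matAct, LinearMap.coe_mk, AddHom.coe_mk, LinearMap.comp_apply, incT, resT]
  rw [Finset.sum_eq_single_of_mem x (Finset.mem_univ x)]
  · simp only [Matrix.diagonal_apply_eq]
    by_cases h : ∀ j, ((x j : ℕ)) < k
    · rw [dif_pos h]
      have h1 : ∏ j : Fin d, (if ((x j : ℕ)) < k then (1 : ℂ) else 0) = 1 :=
        Finset.prod_eq_one fun j _ => if_pos (h j)
      rw [h1, one_mul]
      exact congrArg f (funext fun j => Fin.ext rfl)
    · rw [dif_neg h]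
      push_neg at h
      obtain ⟨j0, hj0⟩ := h
      refine mul_eq_zero_of_left (Finset.prod_eq_zero (Finset.mem_univ j0) ?_) _
      exact if_neg (not_lt.mpr hj0)
  · intro y _ hyx
    obtain ⟨j0, hj0⟩ := Function.ne_iff.mp (Ne.symm hyx)
    refine mul_eq_zero_of_left (Finset.prod_eq_zero (Finset.mem_univ j0) ?_) _
    exact Matrix.diagonal_apply_ne _ hj0

theorem map_mem_exteriorPower {M N : Type*} [AddCommGroup M] [Module ℂ M]
    [AddCommGroup N] [Module ℂ N] (f : M →ₗ[ℂ] N) {n : ℕ} {x : ExteriorAlgebra ℂ M}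
    (hx : x ∈ ⋀[ℂ]^n M) : ExteriorAlgebra.map f x ∈ ⋀[ℂ]^n N := by
  rw [← ExteriorAlgebra.ιMulti_span_fixedDegree] at hx ⊢
  induction hx using Submodule.span_induction with
  | mem y hy =>
      obtain ⟨v, rfl⟩ := hy
      rw [ExteriorAlgebra.map_apply_ιMulti]
      exact Submodule.subset_span ⟨_, rfl⟩
  | zero => simpa using Submodule.zero_mem _
  | add a b _ _ ha hb => rw [map_add]; exact Submodule.add_mem _ ha hb
  | smul c a _ ha => rw [map_smul]; exact Submodule.smul_mem _ _ ha

end SI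
namespace SI

open Equiv Equiv.Perm

variable {k : ℕ}

/-- The cycle sending `i` to `last k` and `i.succAbove j` to `j.castSucc`. -/
def bperm (i : Fin (k + 1)) : Equiv.Perm (Fin (k + 1)) :=
  Fin.revPerm * (Fin.rev i).cycleRange * Fin.revPerm

theorem bperm_apply_self (i : Fin (k + 1)) : bperm i i = Fin.last k := by
  simp only [bperm, Equiv.Perm.mul_apply, Fin.revPerm_apply]
  rw [Fin.cycleRange_self, Fin.rev_zero]

theorem bperm_apply_succAbove (i : Fin (k + 1)) (j : Fin k) :
    bperm i (i.succAbove j) = j.castSucc := by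
  simp only [bperm, Equiv.Perm.mul_apply, Fin.revPerm_apply]
  rw [Fin.rev_succAbove, Fin.cycleRange_succAbove, Fin.rev_succ, Fin.rev_rev]

theorem sign_bperm (i : Fin (k + 1)) : Equiv.Perm.sign (bperm i) = (-1) ^ (k - (i : ℕ)) := by
  have hs : ∀ s t : ℤˣ, s * t * s = t := fun s t => by
    rw [mul_comm s t, mul_assoc, Int.units_mul_self, mul_one]
  have hv : ((Fin.rev i : Fin (k + 1)) : ℕ) = k - (i : ℕ) := by
    rw [Fin.val_rev]
    omega
  rw [bperm, map_mul, map_mul, Fin.sign_cycleRange, hv, hs]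

/-- The subtype equivalence used to extend permutations of `Fin k` to `Fin (k+1)`. -/
def csEquiv : Fin k ≃ {x : Fin (k + 1) // (x : ℕ) < k} where
  toFun x := ⟨x.castSucc, x.isLt⟩
  invFun y := ⟨(y : Fin (k + 1)), y.2⟩
  left_inv x := Fin.ext rfl
  right_inv y := Subtype.ext (Fin.ext rfl)

/-- Extension of a permutation of `Fin k` to `Fin (k+1)` fixing `last k`. -/
def pext (σ : Equiv.Perm (Fin k)) : Equiv.Perm (Fin (k + 1)) :=
  σ.extendDomain csEquiv

theorem pext_castSucc (σ : Equiv.Perm (Fin k)) (x : Fin k) :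
    pext σ x.castSucc = (σ x).castSucc :=
  σ.extendDomain_apply_image csEquiv x

theorem pext_last (σ : Equiv.Perm (Fin k)) : pext σ (Fin.last k) = Fin.last k :=
  σ.extendDomain_apply_not_subtype csEquiv (by simp)

theorem sign_pext (σ : Equiv.Perm (Fin k)) : Equiv.Perm.sign (pext σ) = Equiv.Perm.sign σ :=
  Equiv.Perm.sign_extendDomain σ csEquiv

theorem pext_injective : Function.Injective (pext (k := k)) := by
  intro σ τ h
  ext x
  have h1 : pext σ x.castSucc = pext τ x.castSucc := by rw [h]
  rw [pext_castSucc, pext_castSucc] at h1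
  have h2 := Fin.castSucc_injective _ h1
  exact congrArg Fin.val h2

/-- Restriction of a permutation of `Fin (k+1)` fixing `last k` to `Fin k`. -/
def pres (ρ : Equiv.Perm (Fin (k + 1))) (h : ρ (Fin.last k) = Fin.last k) :
    Equiv.Perm (Fin k) where
  toFun x := (ρ x.castSucc).castPred (fun hc => (Fin.castSucc_lt_last x).ne
    (ρ.injective (hc.trans h.symm)))
  invFun x := (ρ⁻¹ x.castSucc).castPred (fun hc => by
    have h' : ρ⁻¹ (Fin.last k) = Fin.last k := by
      conv_lhs => rw [← h]
      exact ρ.symm_apply_apply _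
    exact (Fin.castSucc_lt_last x).ne (ρ⁻¹.injective (hc.trans h'.symm)))
  left_inv x := by
    simp only [Fin.castSucc_castPred]
    apply Fin.ext
    rw [Fin.coe_castPred]
    rw [show (ρ⁻¹ : Equiv.Perm (Fin (k + 1))) (ρ x.castSucc) = x.castSucc from
      ρ.symm_apply_apply _]
    rfl
  right_inv x := by
    simp only [Fin.castSucc_castPred]
    apply Fin.ext
    rw [Fin.coe_castPred]
    rw [show ρ ((ρ⁻¹ : Equiv.Perm (Fin (k + 1))) x.castSucc) = x.castSucc from
      ρ.apply_symm_apply _]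
    rfl

theorem pext_pres (ρ : Equiv.Perm (Fin (k + 1))) (h : ρ (Fin.last k) = Fin.last k) :
    pext (pres ρ h) = ρ := by
  ext x
  induction x using Fin.lastCases with
  | last => rw [pext_last, h]
  | cast y =>
      rw [pext_castSucc]
      exact congrArg Fin.val (Fin.castSucc_castPred _
        (fun hc => (Fin.castSucc_lt_last y).ne (ρ.injective (hc.trans h.symm))))

end SI
namespace SI

open Equiv Equiv.Perm ExteriorAlgebra

variable {d k : ℕ}

/-- Evaluation at the constant-`last` point, as a dual vector. -/
def dlast (d k : ℕ) : Module.Dual ℂ (Tens d (k + 1)) :=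
  LinearMap.proj (fun _ : Fin d => Fin.last k)

theorem dlast_eb (x : Fin d → Fin (k + 1)) :
    dlast d k (eb x) = if (fun _ : Fin d => Fin.last k) = x then 1 else 0 := by
  simp [dlast, eb, Pi.single_apply]

theorem bperm_inv_last (i : Fin (k + 1)) : (bperm i)⁻¹ (Fin.last k) = i := by
  rw [← bperm_apply_self i]
  exact (bperm i).symm_apply_apply i

def presOf (i : Fin (k + 1)) (ρ : Perm (Fin (k + 1))) (h : ρ i = Fin.last k) :
    Perm (Fin k) :=
  pres (ρ * (bperm i)⁻¹) (by rw [Perm.mul_apply, bperm_inv_last]; exact h)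

theorem pres_congr {ρ ρ' : Perm (Fin (k + 1))} (e : ρ = ρ')
    {h : ρ (Fin.last k) = Fin.last k} {h' : ρ' (Fin.last k) = Fin.last k} :
    pres ρ h = pres ρ' h' := by subst e; rfl

theorem pres_pext (σ : Perm (Fin k)) (h : pext σ (Fin.last k) = Fin.last k) :
    pres (pext σ) h = σ :=
  pext_injective (pext_pres _ _)

theorem pext_presOf_mul (i : Fin (k + 1)) (ρ : Perm (Fin (k + 1)))
    (h : ρ i = Fin.last k) : pext (presOf i ρ h) * bperm i = ρ := by
  rw [presOf, pext_pres, inv_mul_cancel_right]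

theorem presOf_phi (i : Fin (k + 1)) (σ : Perm (Fin k))
    (h : (pext σ * bperm i) i = Fin.last k) : presOf i (pext σ * bperm i) h = σ := by
  rw [presOf]
  exact (pres_congr (mul_inv_cancel_right _ _)).trans (pres_pext σ (pext_last σ))

/-- Summand appearing after contracting and restricting the Cayley form. -/
def Fterm (d k : ℕ) (i : Fin (k + 1)) (π : Fin d → Perm (Fin (k + 1))) :
    ExteriorAlgebra ℂ (Tens d k) :=
  ((∏ j, Equiv.Perm.sign (π j) : ℤˣ) : ℤ) •
    (((-1 : ℂ) ^ (i : ℕ) * dlast d k (eb fun j => π j i)) •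
      ιMulti ℂ k fun j' => resT d k (eb fun j => π j (i.succAbove j')))

/-- Summand of the Cayley form at level `k`, rescaled by `(-1)^k`. -/
def Gterm (d k : ℕ) (σ : Fin d → Perm (Fin k)) : ExteriorAlgebra ℂ (Tens d k) :=
  (-1 : ℂ) ^ k •
    (((∏ j, Equiv.Perm.sign (σ j) : ℤˣ) : ℤ) • ιMulti ℂ k fun i' => eb fun j => σ j i')

theorem Fterm_ne_zero {i : Fin (k + 1)} {π : Fin d → Perm (Fin (k + 1))}
    (h : Fterm d k i π ≠ 0) : ∀ j, π j i = Fin.last k := by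
  intro j
  by_contra hc
  apply h
  have h0 : (fun _ : Fin d => Fin.last k) ≠ fun j => π j i := by
    intro he
    exact hc (congrFun he j).symm
  rw [Fterm, dlast_eb, if_neg h0, mul_zero, zero_smul, smul_zero]

theorem Fterm_phi (hd : Odd d) (i : Fin (k + 1)) (σ : Fin d → Perm (Fin k)) :
    Fterm d k i (fun j => pext (σ j) * bperm i) = Gterm d k σ := by
  have happ : ∀ (j : Fin d) (j' : Fin k),
      (pext (σ j) * bperm i) (i.succAbove j') = (σ j j').castSucc := by
    intro j j'
    rw [Perm.mul_apply, bperm_apply_succAbove, pext_castSucc]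
  have hself : ∀ j : Fin d, (pext (σ j) * bperm i) i = Fin.last k := by
    intro j
    rw [Perm.mul_apply, bperm_apply_self, pext_last]
  have hres : (fun j' => resT d k (eb fun j => (pext (σ j) * bperm i) (i.succAbove j'))) =
      fun i' => eb fun j => σ j i' := by
    funext j'
    have h1 : (fun j => (pext (σ j) * bperm i) (i.succAbove j')) =
        fun j => (σ j j').castSucc := funext fun j => happ j j'
    rw [h1, resT_eb_of _ (fun j => (σ j j').isLt)]
    exact congrArg _ (funext fun j => Fin.ext rfl)
  have hdl : dlast d k (eb fun j => (pext (σ j) * bperm i) i) = 1 := by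
    have h1 : (fun j => (pext (σ j) * bperm i) i) = fun _ : Fin d => Fin.last k :=
      funext hself
    rw [h1, dlast_eb, if_pos rfl]
  have hsgn : (∏ j, Equiv.Perm.sign (pext (σ j) * bperm i)) =
      (∏ j, Equiv.Perm.sign (σ j)) * (-1 : ℤˣ) ^ (k - (i : ℕ)) := by
    have h1 : ∀ j : Fin d, Equiv.Perm.sign (pext (σ j) * bperm i) =
        Equiv.Perm.sign (σ j) * (-1 : ℤˣ) ^ (k - (i : ℕ)) := by
      intro j
      rw [map_mul, sign_pext, sign_bperm]
    rw [Finset.prod_congr rfl fun j _ => h1 j, Finset.prod_mul_distrib,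
      Finset.prod_const, Finset.card_univ, Fintype.card_fin]
    congr 1
    rw [← pow_mul, mul_comm (k - (i : ℕ)) d, pow_mul, Odd.neg_one_pow hd]
  rw [Fterm, Gterm, hres, hdl, hsgn]
  rw [← Int.cast_smul_eq_zsmul ℂ, ← Int.cast_smul_eq_zsmul ℂ, smul_smul, smul_smul]
  congr 1
  have hik : (k - (i : ℕ)) + (i : ℕ) = k := Nat.sub_add_cancel (Nat.lt_succ_iff.mp i.isLt)
  rw [mul_one]
  simp only [Units.val_mul, Units.val_pow_eq_pow_val, Units.val_neg, Units.val_one,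
    Int.cast_mul, Int.cast_pow, Int.cast_neg, Int.cast_one]
  rw [mul_assoc, ← pow_add, hik]
  ring

theorem sum_Fterm (hd : Odd d) (i : Fin (k + 1)) :
    ∑ π : Fin d → Perm (Fin (k + 1)), Fterm d k i π = ∑ σ : Fin d → Perm (Fin k), Gterm d k σ := by
  refine Finset.sum_bij_ne_zero
    (fun π _ hπ => fun j => presOf i (π j) (Fterm_ne_zero hπ j))
    (fun π h₁ h₂ => Finset.mem_univ _) ?_ ?_ ?_
  · intro π₁ h₁₁ h₁₂ π₂ h₂₁ h₂₂ he
    funext j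
    have e1 := pext_presOf_mul i (π₁ j) (Fterm_ne_zero h₁₂ j)
    have e2 := pext_presOf_mul i (π₂ j) (Fterm_ne_zero h₂₂ j)
    rw [← e1, ← e2]
    exact congrArg (fun p => pext p * bperm i) (congrFun he j)
  · intro σ _ hσ
    refine ⟨fun j => pext (σ j) * bperm i, Finset.mem_univ _, ?_, ?_⟩
    · rw [Fterm_phi hd i σ]; exact hσ
    · funext j
      exact presOf_phi i (σ j) _
  · intro π h₁ h₂
    have hrec : (fun j => pext (presOf i (π j) (Fterm_ne_zero h₂ j)) * bperm i) = π :=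
      funext fun j => pext_presOf_mul i (π j) (Fterm_ne_zero h₂ j)
    conv_lhs => rw [← hrec]
    rw [Fterm_phi hd i]

end SI
namespace SI

open Equiv Equiv.Perm ExteriorAlgebra

variable {d k : ℕ}

theorem sum_decomp (d k : ℕ) :
    resA d k (CliffordAlgebra.contractLeft (dlast d k) (cayley d (k + 1))) =
      ∑ i : Fin (k + 1), ∑ π : Fin d → Perm (Fin (k + 1)), Fterm d k i π := by
  rw [cayley]
  simp only [map_sum, map_zsmul]
  simp_rw [SI.contract_ιMulti (dlast d k) k]
  simp only [map_sum, map_smul, map_apply_ιMulti, Function.comp_def]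
  simp_rw [Finset.smul_sum]
  rw [Finset.sum_comm]
  simp only [Fterm]

theorem key (hd : Odd d) (d' k' : ℕ) : True := trivial

theorem key_contract (hd : Odd d) :
    resA d k (CliffordAlgebra.contractLeft (dlast d k) (cayley d (k + 1))) =
      ((-1 : ℂ) ^ k * ((k : ℂ) + 1)) • cayley d k := by
  rw [sum_decomp]
  rw [Finset.sum_congr rfl fun i _ => sum_Fterm hd i]
  have hG : ∑ σ : Fin d → Perm (Fin k), Gterm d k σ = (-1 : ℂ) ^ k • cayley d k := by
    rw [cayley, Finset.smul_sum]
    simp only [Gterm]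
  rw [hG, Finset.sum_const, Finset.card_univ, Fintype.card_fin]
  rw [← Nat.cast_smul_eq_nsmul ℂ, smul_smul]
  congr 1
  push_cast
  ring

end SI
namespace SI

open ExteriorAlgebra

theorem step (d n m : ℕ) (hd : Odd d) (nu : Fin d → Fin n → ℕ)
    (hinj : ∀ v ∈ HWVspace d n nu m, cayley d n * v = 0 → v = 0) :
    ∀ v ∈ HWVspace d (n + 1)
        (fun j (i : Fin (n + 1)) => if h : (i : ℕ) < n then nu j ⟨(i : ℕ), h⟩ else 0) m,
      cayley d (n + 1) * v = 0 → v = 0 := by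
  have hd0 : 0 < d := hd.pos
  intro v hv hcv
  obtain ⟨hvm, hwt, huni⟩ := hv
  -- v is fixed by the projection onto the first n coordinates
  have hproj : incA d n (resA d n v) = v := by
    have h1 := hwt (fun _ i => if (i : ℕ) < n then (1 : ℂ) else 0)
    have hscal : (∏ j : Fin d, ∏ i : Fin (n + 1),
        (if (i : ℕ) < n then (1 : ℂ) else 0) ^
          (if h : (i : ℕ) < n then nu j ⟨(i : ℕ), h⟩ else 0)) = 1 := by
      refine Finset.prod_eq_one fun j _ => Finset.prod_eq_one fun i _ => ?_
      by_cases h : (i : ℕ) < n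
      · rw [if_pos h]; exact one_pow _
      · rw [if_neg h, dif_neg h, pow_zero]
    rw [hscal, one_smul] at h1
    have h2 : extAct (fun _ : Fin d => Matrix.diagonal
        (fun i : Fin (n + 1) => if (i : ℕ) < n then (1 : ℂ) else 0)) v
        = incA d n (resA d n v) := by
      show ExteriorAlgebra.map (matAct _) v = _
      rw [matAct_proj]
      have h3 := ExteriorAlgebra.map_comp_map (resT d n) (incT d n)
      have h4 := DFunLike.congr_fun h3 v
      simpa only [AlgHom.comp_apply] using h4.symm
    rw [← h2]
    exact h1
  obtain ⟨u, hu⟩ : ∃ u, incA d n u = v := ⟨resA d n v, hproj⟩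
  have hu' : resA d n v = u := by rw [← hu, resA_incA]
  -- the restriction u is in the HWV space at level n
  have hwmem : u ∈ HWVspace d n nu m := by
    rw [← hu']
    refine ⟨map_mem_exteriorPower _ hvm, ?_, ?_⟩
    · -- weight vector
      intro a
      have H1 : ∀ (j : Fin d) (x y : Fin n),
          Matrix.diagonal (fun i : Fin (n + 1) =>
            if h : (i : ℕ) < n then a j ⟨(i : ℕ), h⟩ else 1) x.castSucc y.castSucc
          = Matrix.diagonal (a j) x y := by
        intro j x y
        by_cases hxy : x = y
        · subst hxy
          rw [Matrix.diagonal_apply_eq, Matrix.diagonal_apply_eq, dif_pos]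
          · exact congrArg (a j) (Fin.ext rfl)
          · exact x.isLt
        · rw [Matrix.diagonal_apply_ne _ (fun hc => hxy (Fin.castSucc_injective _ hc)),
            Matrix.diagonal_apply_ne _ hxy]
      have H2 : ∀ (j : Fin d) (x : Fin n) (y : Fin (n + 1)), ¬ ((y : ℕ) < n) →
          Matrix.diagonal (fun i : Fin (n + 1) =>
            if h : (i : ℕ) < n then a j ⟨(i : ℕ), h⟩ else 1) x.castSucc y = 0 := by
        intro j x y hy
        refine Matrix.diagonal_apply_ne _ ?_
        intro hc
        exact hy (hc ▸ x.isLt)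
      have h5 := extAct_res (g := fun j => Matrix.diagonal (a j)) H1 H2 v
      rw [hwt (fun j i => if h : (i : ℕ) < n then a j ⟨(i : ℕ), h⟩ else 1), map_smul] at h5
      rw [← h5]
      congr 1
      refine Finset.prod_congr rfl fun j _ => ?_
      rw [Fin.prod_univ_castSucc]
      have hlast : (if h : ((Fin.last n : Fin (n + 1)) : ℕ) < n then
            a j ⟨((Fin.last n : Fin (n + 1)) : ℕ), h⟩ else 1) ^
          (if h : ((Fin.last n : Fin (n + 1)) : ℕ) < n then
            nu j ⟨((Fin.last n : Fin (n + 1)) : ℕ), h⟩ else 0) = 1 := by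
        rw [dif_neg (by simp), dif_neg (by simp), pow_zero]
      rw [hlast, mul_one]
      refine Finset.prod_congr rfl fun i _ => ?_
      have hi : ((i.castSucc : Fin (n + 1)) : ℕ) < n := i.isLt
      show (if h : ((i.castSucc : Fin (n + 1)) : ℕ) < n then
          a j ⟨((i.castSucc : Fin (n + 1)) : ℕ), h⟩ else 1) ^
        (if h : ((i.castSucc : Fin (n + 1)) : ℕ) < n then
          nu j ⟨((i.castSucc : Fin (n + 1)) : ℕ), h⟩ else 0) = a j i ^ nu j i
      rw [dif_pos hi, dif_pos hi]
      congr 1 <;> exact congrArg _ (Fin.ext rfl)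
    · -- unipotent invariance
      intro g hg
      set G : Fin d → Matrix (Fin (n + 1)) (Fin (n + 1)) ℂ := fun j => Matrix.of fun x y =>
        if hx : (x : ℕ) < n then
          (if hy : (y : ℕ) < n then g j ⟨(x : ℕ), hx⟩ ⟨(y : ℕ), hy⟩ else 0)
        else (if x = y then 1 else 0) with hG
      have H1 : ∀ (j : Fin d) (x y : Fin n), G j x.castSucc y.castSucc = g j x y := by
        intro j x y
        show (if hx : ((x.castSucc : Fin (n + 1)) : ℕ) < n then
          (if hy : ((y.castSucc : Fin (n + 1)) : ℕ) < n then _ else 0) else _) = _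
        have hx' : ((x.castSucc : Fin (n + 1)) : ℕ) < n := x.isLt
        have hy' : ((y.castSucc : Fin (n + 1)) : ℕ) < n := y.isLt
        rw [dif_pos hx', dif_pos hy']
        congr 1 <;> exact Fin.ext rfl
      have H2 : ∀ (j : Fin d) (x : Fin n) (y : Fin (n + 1)), ¬ ((y : ℕ) < n) →
          G j x.castSucc y = 0 := by
        intro j x y hy
        show (if hx : ((x.castSucc : Fin (n + 1)) : ℕ) < n then
          (if hy2 : ((y : Fin (n + 1)) : ℕ) < n then _ else 0) else _) = 0
        have hx' : ((x.castSucc : Fin (n + 1)) : ℕ) < n := x.isLt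
        rw [dif_pos hx', dif_neg hy]
      have hGuni : ∀ j, IsUnipotent (G j) := by
        intro j
        constructor
        · intro x
          show (if hx : (x : ℕ) < n then (if hy : (x : ℕ) < n then _ else 0)
            else (if x = x then (1 : ℂ) else 0)) = 1
          by_cases hx : (x : ℕ) < n
          · rw [dif_pos hx, dif_pos hx]; exact (hg j).1 _
          · rw [dif_neg hx, if_pos rfl]
        · intro x y hyx
          show (if hx : (x : ℕ) < n then (if hy : (y : ℕ) < n then _ else 0)
            else (if x = y then (1 : ℂ) else 0)) = 0
          by_cases hx : (x : ℕ) < n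
          · have hy : (y : ℕ) < n := lt_trans hyx hx
            rw [dif_pos hx, dif_pos hy]
            exact (hg j).2 _ _ hyx
          · rw [dif_neg hx, if_neg (fun hc => absurd (hc ▸ hyx) (lt_irrefl _))]
      have h6 := extAct_res H1 H2 v
      rw [huni G hGuni] at h6
      exact h6.symm
  -- transfer the Lefschetz equation down to level n
  have hcontract : ((-1 : ℂ) ^ n * ((n : ℂ) + 1)) • (cayley d n * u) = 0 := by
    have h0 : CliffordAlgebra.contractLeft (dlast d n) (cayley d (n + 1) * v) = 0 := by
      rw [hcv, map_zero]
    rw [← hu] at h0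
    have hcz : CliffordAlgebra.contractLeft (dlast d n) (incA d n u) = 0 := by
      refine SI.contract_map_zero _ _ ?_ u
      intro f
      show (incT d n f) (fun _ : Fin d => Fin.last n) = 0
      have hne : ¬ ∀ j : Fin d, (((fun _ : Fin d => Fin.last n) j : Fin (n + 1)) : ℕ) < n := by
        intro hall
        exact absurd (hall ⟨0, hd0⟩) (by simp)
      exact dif_neg hne
    have h1 : CliffordAlgebra.contractLeft (dlast d n) (cayley d (n + 1) * incA d n u) =
        CliffordAlgebra.contractLeft (dlast d n) (cayley d (n + 1)) * incA d n u := by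
      rw [SI.contract_mul, hcz, mul_zero, add_zero]
    have h3 : resA d n (CliffordAlgebra.contractLeft (dlast d n) (cayley d (n + 1))
        * incA d n u) = ((-1 : ℂ) ^ n * ((n : ℂ) + 1)) • (cayley d n * u) := by
      rw [map_mul, key_contract hd, resA_incA, smul_mul_assoc]
    rw [← h3, ← h1, h0, map_zero]
  have hcay : cayley d n * u = 0 := by
    have hc0 : ((-1 : ℂ) ^ n * ((n : ℂ) + 1)) ≠ 0 := by
      refine mul_ne_zero (pow_ne_zero _ (by norm_num)) ?_
      have := Nat.cast_ne_zero (R := ℂ).mpr (Nat.succ_ne_zero n)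
      push_cast at this
      exact this
    exact (smul_eq_zero.mp hcontract).resolve_left hc0
  have hu0 : u = 0 := hinj u hwmem hcay
  rw [← hu, hu0, map_zero]

end SI
/-- **stable injectivity of the Lefschetz map.** Let `d ≥ 3` be odd and let
`𝛌` be a `d`-tuple of partitions contained in the rectangle `k^{d-1} × k` (encoded by the
tuple `mu` of conjugate partitions: weakly decreasing `k`-tuples with entries `≤ k^{d-1}`
summing to `m`). If `L_k : v ↦ ω_{d,k} ∧ v` is injective on the highest weight space of
weight `mu` in `⋀ V_k`, then for every `ℓ > k` the map `L_ℓ : v ↦ ω_{d,ℓ} ∧ v` is injective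
on the highest weight space of the padded weight in `⋀ V_ℓ`. -/
theorem stable_injectivity (d k m : ℕ) (hd : Odd d) (hd3 : 3 ≤ d)
    (mu : Fin d → Fin k → ℕ) (hanti : ∀ j, Antitone (mu j))
    (hbound : ∀ j i, mu j i ≤ k ^ (d - 1)) (hsum : ∀ j, ∑ i, mu j i = m)
    (hinj : ∀ v ∈ HWVspace d k mu m, cayley d k * v = 0 → v = 0)
    (ℓ : ℕ) (hkl : k < ℓ) :
    ∀ v ∈ HWVspace d ℓ
        (fun j (i : Fin ℓ) => if h : (i : ℕ) < k then mu j ⟨(i : ℕ), h⟩ else 0) m,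
      cayley d ℓ * v = 0 → v = 0 := by
  have main : ∀ t, k ≤ t → ∀ v ∈ HWVspace d t
      (fun j (i : Fin t) => if h : (i : ℕ) < k then mu j ⟨(i : ℕ), h⟩ else 0) m,
      cayley d t * v = 0 → v = 0 := by
    intro t
    refine Nat.le_induction ?_ ?_ t
    · have he : (fun j (i : Fin k) => if h : (i : ℕ) < k then mu j ⟨(i : ℕ), h⟩ else 0)
          = mu := by
        funext j i
        rw [dif_pos i.isLt]
      rw [he]
      exact hinj
    · intro t ht IH
      have hstep := SI.step d t m hd
        (fun j (i : Fin t) => if h : (i : ℕ) < k then mu j ⟨(i : ℕ), h⟩ else 0) IH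
      have he : (fun j (i : Fin (t + 1)) => if h : (i : ℕ) < t then
            (if h2 : ((⟨(i : ℕ), h⟩ : Fin t) : ℕ) < k then mu j ⟨((⟨(i : ℕ), h⟩ : Fin t) : ℕ), h2⟩
              else 0) else 0)
          = (fun j (i : Fin (t + 1)) => if h : (i : ℕ) < k then mu j ⟨(i : ℕ), h⟩ else 0) := by
        funext j i
        by_cases h1 : (i : ℕ) < t
        · rw [dif_pos h1]
        · rw [dif_neg h1, dif_neg (fun h2 => h1 (lt_of_lt_of_le h2 ht))]
      simp only [] at hstep
      rw [he] at hstep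
      exact hstep
  exact main ℓ (le_of_lt hkl)
end
end

section
/- Let $d \ge 3$ be odd, $k < \ell$, and let $v \in \bigwedge V_k \subseteq \bigwedge V_\ell$ be a weight vector (for $\mathrm{GL}(k)^{\times d}$) of weight $\pmb{\lambda}$ with $\omega_{d,k} \wedge v \ne 0$. Then $\omega_{d,\ell} \wedge v \ne 0$ in $\bigwedge V_\ell$. -/
open ExteriorAlgebra

noncomputable section

/-- The inclusion `(ℂ^k)^{⊗d} ⊆ (ℂ^ℓ)^{⊗d}` induced by the standard inclusion `ℂ^k ⊆ ℂ^ℓ`. -/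
def inclMap {d k ℓ : ℕ} (h : k ≤ ℓ) : Tens d k →ₗ[ℂ] Tens d ℓ where
  toFun f := fun x =>
    if h' : ∀ j, ((x j : ℕ) < k) then f (fun j => ⟨(x j : ℕ), h' j⟩) else 0
  map_add' f g := by
    funext x
    by_cases h' : ∀ j, ((x j : ℕ) < k) <;> simp [h']
  map_smul' c f := by
    funext x
    by_cases h' : ∀ j, ((x j : ℕ) < k) <;> simp [h']


section Lemmas

variable {d k ℓ : ℕ}

/-- pointwise formula for `inclMap` on basis vectors -/
lemma inclMap_eb (h : k ≤ ℓ) (x : Fin d → Fin k) :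
    inclMap (d := d) h (eb x) = eb (fun j => Fin.castLE h (x j)) := by
  funext y
  simp only [inclMap, LinearMap.coe_mk, AddHom.coe_mk, eb]
  by_cases h' : ∀ j, ((y j : ℕ) < k)
  · rw [dif_pos h']
    by_cases hxy : y = fun j => Fin.castLE h (x j)
    · subst hxy
      have : (fun j => (⟨(Fin.castLE h (x j) : ℕ), h' j⟩ : Fin k)) = x := by
        funext j; ext; rfl
      rw [this]
      simp
    · have hne : (fun j => (⟨(y j : ℕ), h' j⟩ : Fin k)) ≠ x := by
        intro hc
        apply hxy
        funext j
        have := congrFun hc j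
        ext
        simpa [Fin.ext_iff] using (Fin.ext_iff.1 this)
      rw [Pi.single_eq_of_ne hne, Pi.single_eq_of_ne (Ne.symm (fun hc => ?_))]
      exact hxy hc.symm
  · rw [dif_neg h']
    have hne : (fun j => Fin.castLE h (x j)) ≠ y := by
      intro hc
      exact h' (fun j => by rw [← hc]; exact (x j).2)
    rw [Pi.single_eq_of_ne (Ne.symm hne)]

/-- the projection `Tens d ℓ → Tens d k` -/
def projMap (h : k ≤ ℓ) : Tens d ℓ →ₗ[ℂ] Tens d k where
  toFun f := fun y => f (fun j => Fin.castLE h (y j))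
  map_add' _ _ := rfl
  map_smul' _ _ := rfl

lemma projMap_comp_inclMap (h : k ≤ ℓ) :
    (projMap (d := d) h) ∘ₗ (inclMap h) = LinearMap.id := by
  apply LinearMap.ext
  intro f
  funext y
  simp only [projMap, inclMap, LinearMap.comp_apply, LinearMap.coe_mk, AddHom.coe_mk,
    LinearMap.id_apply]
  rw [dif_pos (show ∀ j, ((Fin.castLE h (y j) : ℕ) < k) from fun j => (y j).2)]
  congr

lemma extMap_incl_injective (h : k ≤ ℓ) :
    Function.Injective (ExteriorAlgebra.map (R := ℂ) (inclMap (d := d) h)) := by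
  intro a b hab
  have := congrArg (ExteriorAlgebra.map (R := ℂ) (projMap (d := d) h)) hab
  rwa [← AlgHom.comp_apply, ← AlgHom.comp_apply, ExteriorAlgebra.map_comp_map,
    projMap_comp_inclMap, ExteriorAlgebra.map_id, AlgHom.coe_id, id_eq, id_eq] at this

lemma inclMap_comp (h1 : k ≤ ℓ) {m : ℕ} (h2 : ℓ ≤ m) :
    (inclMap (d := d) h2) ∘ₗ (inclMap h1) = inclMap (h1.trans h2) := by
  apply LinearMap.ext
  intro f
  funext y
  simp only [inclMap, LinearMap.comp_apply, LinearMap.coe_mk, AddHom.coe_mk]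
  by_cases hy : ∀ j, ((y j : ℕ) < k)
  · rw [dif_pos (fun j => lt_of_lt_of_le (hy j) h1), dif_pos hy]
  · rw [dif_neg hy]
    by_cases hy2 : ∀ j, ((y j : ℕ) < ℓ)
    · rw [dif_pos hy2, dif_neg]
      exact hy
    · rw [dif_neg hy2]

end Lemmas
section Contract

open CliffordAlgebra

variable {R : Type*} [CommRing R] {M : Type*} [AddCommGroup M] [Module R M]
variable {N : Type*} [AddCommGroup N] [Module R N]

/-- Leibniz rule for left contraction on the exterior algebra, with the "grade involution"
expressed as `map (-id)`. -/
lemma contractLeft_mul_leibniz (φ : Module.Dual R M) (x y : ExteriorAlgebra R M) :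
    contractLeft (Q := (0 : QuadraticForm R M)) φ (x * y) =
      contractLeft (Q := (0 : QuadraticForm R M)) φ x * y +
        ExteriorAlgebra.map (-LinearMap.id) x *
          contractLeft (Q := (0 : QuadraticForm R M)) φ y := by
  induction x using CliffordAlgebra.induction generalizing y with
  | algebraMap r =>
      rw [contractLeft_algebraMap, contractLeft_algebraMap_mul, zero_mul, zero_add,
        AlgHom.commutes]
  | ι m =>
      rw [contractLeft_ι_mul, contractLeft_ι, ExteriorAlgebra.map_apply_ι]
      simp only [LinearMap.neg_apply, LinearMap.id_apply, map_neg]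
      rw [Algebra.smul_def, neg_mul, sub_eq_add_neg]
  | mul a b iha ihb =>
      rw [mul_assoc, iha, ihb, iha b]
      simp only [map_mul, add_mul, mul_add, mul_assoc]
      abel
  | add a b iha ihb =>
      rw [add_mul, map_add, iha, ihb, map_add, map_add, add_mul, add_mul]
      abel

/-- If `φ` vanishes on the image of `F`, then contraction by `φ` kills the image of `map F`. -/
lemma contractLeft_map_eq_zero (φ : Module.Dual R M) (F : N →ₗ[R] M)
    (hφ : ∀ n, φ (F n) = 0) (x : ExteriorAlgebra R N) :
    contractLeft (Q := (0 : QuadraticForm R M)) φ (ExteriorAlgebra.map F x) = 0 := by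
  induction x using CliffordAlgebra.induction with
  | algebraMap r => rw [AlgHom.commutes, contractLeft_algebraMap]
  | ι m => rw [ExteriorAlgebra.map_apply_ι, contractLeft_ι, hφ, map_zero]
  | mul a b iha ihb =>
      rw [map_mul, contractLeft_mul_leibniz, iha, ihb, zero_mul, mul_zero, add_zero]
  | add a b iha ihb => rw [map_add, map_add, iha, ihb, add_zero]

/-- wedge of a `snoc` family -/
lemma ιMulti_snoc {n : ℕ} (w : Fin n → M) (u : M) :
    ExteriorAlgebra.ιMulti R (n + 1) (Fin.snoc w u) =
      ExteriorAlgebra.ιMulti R n w * ExteriorAlgebra.ι R u := by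
  rw [ExteriorAlgebra.ιMulti_apply, ExteriorAlgebra.ιMulti_apply, List.ofFn_succ',
    List.concat_eq_append, List.prod_append]
  simp only [Fin.snoc_castSucc, Fin.snoc_last, List.prod_cons, List.prod_nil, mul_one]

/-- key cancellation: if `X`, `Y` are killed by the contraction `φ⌋·` and `φ u = 1`, then
`X * (ι u * Y) = 0` forces `(map (-id) X) * Y = 0`. -/
lemma contract_key {R : Type*} [CommRing R] {M : Type*} [AddCommGroup M] [Module R M]
    (φ : Module.Dual R M) (X Y : ExteriorAlgebra R M) (u : M)
    (hXc : contractLeft (Q := (0 : QuadraticForm R M)) φ X = 0)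
    (hYc : contractLeft (Q := (0 : QuadraticForm R M)) φ Y = 0)
    (hφu : φ u = 1) (h1 : X * (ExteriorAlgebra.ι R u * Y) = 0) :
    ExteriorAlgebra.map (-LinearMap.id : M →ₗ[R] M) X * Y = 0 := by
  have h3 := congrArg (contractLeft (Q := (0 : QuadraticForm R M)) φ) h1
  rw [map_zero, contractLeft_mul_leibniz, hXc, zero_mul, zero_add,
    CliffordAlgebra.contractLeft_ι_mul, hφu, one_smul, hYc, mul_zero, sub_zero] at h3
  exact h3

end Contract
section Align

variable {d k : ℕ}

/-- the alignment predicate: a point of the cube is either entirely in the lower subcube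
or is the top diagonal point -/
def alignP {d k : ℕ} (y : Fin d → Fin (k + 1)) : Prop :=
  (∀ j, y j ≠ Fin.last k) ∨ (∀ j, y j = Fin.last k)

instance {d k : ℕ} (y : Fin d → Fin (k + 1)) : Decidable (alignP y) := by
  unfold alignP; infer_instance

/-- the projection onto the span of the aligned basis vectors -/
def alignMap (d k : ℕ) : Tens d (k + 1) →ₗ[ℂ] Tens d (k + 1) where
  toFun f := fun y => if alignP y then f y else 0
  map_add' f g := by funext y; by_cases h : alignP y <;> simp [h]
  map_smul' c f := by funext y; by_cases h : alignP y <;> simp [h]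

lemma alignMap_eb_of (x : Fin d → Fin (k + 1)) (h : alignP x) :
    alignMap d k (eb x) = eb x := by
  funext y
  simp only [alignMap, LinearMap.coe_mk, AddHom.coe_mk]
  by_cases hy : alignP y
  · rw [if_pos hy]
  · rw [if_neg hy]
    have : y ≠ x := fun hc => hy (hc ▸ h)
    rw [eb, Pi.single_eq_of_ne this]

lemma alignMap_eb_of_not (x : Fin d → Fin (k + 1)) (h : ¬ alignP x) :
    alignMap d k (eb x) = 0 := by
  funext y
  simp only [alignMap, LinearMap.coe_mk, AddHom.coe_mk]
  by_cases hy : alignP y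
  · rw [if_pos hy]
    have : x ≠ y := fun hc => h (hc ▸ hy)
    simp [eb, Pi.single_eq_of_ne (Ne.symm this)]
  · simp [if_neg hy]

lemma alignMap_comp_inclMap :
    (alignMap d k) ∘ₗ (inclMap (Nat.le_succ k)) = inclMap (Nat.le_succ k) := by
  apply LinearMap.ext
  intro f
  funext y
  simp only [alignMap, inclMap, LinearMap.comp_apply, LinearMap.coe_mk, AddHom.coe_mk]
  by_cases hy : alignP y
  · rw [if_pos hy]
  · rw [if_neg hy, eq_comm, dif_neg]
    intro h'
    exact hy (Or.inl (fun j => by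
      intro hc
      have := h' j
      rw [hc] at this
      simp [Fin.last] at this))

end Align

section Perms

variable {k : ℕ}

/-- `Fin k` is equivalent to the non-`last` elements of `Fin (k+1)`. -/
def castSuccEquiv (k : ℕ) : Fin k ≃ {i : Fin (k + 1) // i ≠ Fin.last k} where
  toFun i := ⟨i.castSucc, (Fin.castSucc_lt_last i).ne⟩
  invFun i := i.1.castPred i.2
  left_inv i := by simp
  right_inv i := by simp [Fin.castSucc_castPred]

/-- extend a permutation of `Fin k` to a permutation of `Fin (k+1)` fixing `last`. -/
def extPerm (σ : Equiv.Perm (Fin k)) : Equiv.Perm (Fin (k + 1)) :=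
  σ.extendDomain (castSuccEquiv k)

lemma extPerm_castSucc (σ : Equiv.Perm (Fin k)) (i : Fin k) :
    extPerm σ i.castSucc = (σ i).castSucc :=
  σ.extendDomain_apply_image (castSuccEquiv k) i

lemma extPerm_last (σ : Equiv.Perm (Fin k)) : extPerm σ (Fin.last k) = Fin.last k :=
  σ.extendDomain_apply_not_subtype _ (by simp)

lemma extPerm_ne_last (σ : Equiv.Perm (Fin k)) {i : Fin (k + 1)} (h : i ≠ Fin.last k) :
    extPerm σ i ≠ Fin.last k := by
  rw [← Fin.castSucc_castPred i h, extPerm_castSucc]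
  exact (Fin.castSucc_lt_last _).ne

lemma sign_extPerm (σ : Equiv.Perm (Fin k)) :
    Equiv.Perm.sign (extPerm σ) = Equiv.Perm.sign σ :=
  Equiv.Perm.sign_extendDomain σ (castSuccEquiv k)

lemma extPerm_injective : Function.Injective (extPerm (k := k)) := by
  intro σ τ h
  ext i
  have := congrFun (congrArg (fun (e : Equiv.Perm (Fin (k+1))) => (e : Fin (k+1) → Fin (k+1)))
    h) i.castSucc
  simp only [extPerm_castSucc] at this
  exact congrArg Fin.val (Fin.castSucc_injective k this)

end Perms
section TermSwap

variable {d k : ℕ}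

lemma castLE_succ_eq_castSucc (x : Fin k) : Fin.castLE (Nat.le_succ k) x = Fin.castSucc x := rfl

lemma units_pow_odd (s : ℤˣ) (hd : Odd d) : s ^ d = s := by
  rcases Int.units_eq_one_or s with h | h <;> subst h
  · rw [one_pow]
  · exact Odd.neg_one_pow hd

/-- The summand of the big Cayley form indexed by `(p, σ)` equals the `p`-independent
canonical one. -/
lemma term_swap (hd : Odd d) (p : Fin (k + 1)) (σ : Fin d → Equiv.Perm (Fin k)) :
    ((∏ j, Equiv.Perm.sign (extPerm (σ j) * Equiv.swap p (Fin.last k)) : ℤˣ) : ℤ) •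
      ExteriorAlgebra.ιMulti ℂ (k + 1)
        (fun i => eb (d := d) (fun j => (extPerm (σ j) * Equiv.swap p (Fin.last k)) i)) =
    ((∏ j, Equiv.Perm.sign (σ j) : ℤˣ) : ℤ) •
      (ExteriorAlgebra.map (inclMap (Nat.le_succ k))
          (ExteriorAlgebra.ιMulti ℂ k (fun i => eb (d := d) (fun j => σ j i))) *
        ExteriorAlgebra.ι ℂ (eb (d := d) (fun _ => Fin.last k))) := by
  set c : Equiv.Perm (Fin (k + 1)) := Equiv.swap p (Fin.last k) with hc
  set s : ℤˣ := Equiv.Perm.sign c with hs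
  set V₀ : Fin (k + 1) → Tens d (k + 1) := fun i => eb (fun j => extPerm (σ j) i) with hV
  -- the family is `V₀ ∘ c`
  have hfam : (fun i => eb (d := d) (fun j => (extPerm (σ j) * c) i)) = V₀ ∘ ⇑c := rfl
  rw [hfam, AlternatingMap.map_perm]
  -- the sign product
  have hsign : (∏ j, Equiv.Perm.sign (extPerm (σ j) * c)) =
      (∏ j, Equiv.Perm.sign (σ j)) * s ^ d := by
    simp only [map_mul, sign_extPerm, ← hs]
    rw [Finset.prod_mul_distrib, Finset.prod_const, Finset.card_univ, Fintype.card_fin]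
  rw [hsign, units_pow_odd s hd]
  -- identify `V₀` with the `snoc` family
  have hsnoc : V₀ = Fin.snoc
      (fun i => inclMap (d := d) (Nat.le_succ k) (eb (fun j => σ j i)))
      (eb (fun _ => Fin.last k)) := by
    funext i
    induction i using Fin.lastCases with
    | last => simp only [Fin.snoc_last, hV, extPerm_last]
    | cast i =>
        rw [Fin.snoc_castSucc, inclMap_eb]
        simp only [hV, extPerm_castSucc, castLE_succ_eq_castSucc]
  rw [hsnoc, ιMulti_snoc, ExteriorAlgebra.map_apply_ιMulti]
  -- combine the scalars
  rw [Units.smul_def, smul_smul, Units.val_mul, mul_assoc, ← Units.val_mul,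
    Int.units_mul_self, Units.val_one, mul_one]
  rfl

end TermSwap
section MainComp

variable {d k : ℕ}

/-- all columns of the permutation tuple are aligned -/
def GoodT {d k : ℕ} (π : Fin d → Equiv.Perm (Fin (k + 1))) : Prop :=
  ∀ i, alignP (fun j => π j i)

instance {d k : ℕ} : DecidablePred (GoodT (d := d) (k := k)) := fun _ => by
  unfold GoodT; infer_instance

/-- forward map of the bijection -/
def PhiT {d k : ℕ} (p : Fin (k + 1)) (σ : Fin d → Equiv.Perm (Fin k)) :
    Fin d → Equiv.Perm (Fin (k + 1)) :=
  fun j => extPerm (σ j) * Equiv.swap p (Fin.last k)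

lemma PhiT_good (p : Fin (k + 1)) (σ : Fin d → Equiv.Perm (Fin k)) : GoodT (PhiT p σ) := by
  intro i
  by_cases hip : i = p
  · subst hip
    right
    intro j
    simp only [PhiT, Equiv.Perm.mul_apply, Equiv.swap_apply_left]
    exact extPerm_last _
  · left
    intro j
    simp only [PhiT, Equiv.Perm.mul_apply]
    apply extPerm_ne_last
    by_cases hil : i = Fin.last k
    · subst hil
      rw [Equiv.swap_apply_right]
      exact fun hc => hip hc.symm
    · rw [Equiv.swap_apply_of_ne_of_ne hip hil]
      exact hil

lemma PhiT_inj (hd0 : 0 < d) (p q : Fin (k + 1)) (σ τ : Fin d → Equiv.Perm (Fin k))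
    (h : PhiT p σ = PhiT q τ) : p = q ∧ σ = τ := by
  set j₀ : Fin d := ⟨0, hd0⟩
  have happ : ∀ j i, PhiT p σ j i = PhiT q τ j i := fun j i => by rw [h]
  have hp : PhiT p σ j₀ p = Fin.last k := by
    simp only [PhiT, Equiv.Perm.mul_apply, Equiv.swap_apply_left]
    exact extPerm_last _
  have hq : PhiT q τ j₀ q = Fin.last k := by
    simp only [PhiT, Equiv.Perm.mul_apply, Equiv.swap_apply_left]
    exact extPerm_last _
  have hpq : p = q := by
    apply Equiv.injective (PhiT p σ j₀)
    rw [hp, happ, hq]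
  subst hpq
  refine ⟨rfl, funext fun j => extPerm_injective ?_⟩
  have := congrFun h j
  simp only [PhiT] at this
  exact mul_right_cancel this

lemma PhiT_surj (hd0 : 0 < d) (π : Fin d → Equiv.Perm (Fin (k + 1))) (hπ : GoodT π) :
    ∃ p σ, PhiT p σ = π := by
  set j₀ : Fin d := ⟨0, hd0⟩
  set p : Fin (k + 1) := (π j₀)⁻¹ (Fin.last k) with hpdef
  have hpl : π j₀ p = Fin.last k := (π j₀).apply_symm_apply _
  have hall : ∀ j, π j p = Fin.last k := by
    rcases hπ p with h | h
    · exact absurd hpl (h j₀)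
    · exact h
  have hother : ∀ i, i ≠ p → ∀ j, π j i ≠ Fin.last k := by
    intro i hip j
    rcases hπ i with h | h
    · exact h j
    · exact absurd (Equiv.injective (π j₀) ((h j₀).trans hpl.symm)) hip
  set c : Equiv.Perm (Fin (k + 1)) := Equiv.swap p (Fin.last k) with hc
  have hρlast : ∀ j, (π j * c) (Fin.last k) = Fin.last k := by
    intro j
    simp only [Equiv.Perm.mul_apply, hc, Equiv.swap_apply_right]
    exact hall j
  have hρne : ∀ j (x : Fin (k + 1)), x ≠ Fin.last k → (π j * c) x ≠ Fin.last k := by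
    intro j x hx
    by_cases hxp : x = p
    · rw [hxp]
      simp only [Equiv.Perm.mul_apply, hc, Equiv.swap_apply_left]
      intro hcon
      have h2 : Fin.last k = p := Equiv.injective (π j) (hcon.trans (hall j).symm)
      rw [hxp] at hx
      exact hx h2.symm
    · simp only [Equiv.Perm.mul_apply, hc, Equiv.swap_apply_of_ne_of_ne hxp hx]
      exact hother x hxp j
  have hiff : ∀ j (x : Fin (k + 1)), x ≠ Fin.last k ↔ (π j * c) x ≠ Fin.last k := by
    intro j x
    constructor
    · exact hρne j x
    · intro hr hx
      subst hx
      exact hr (hρlast j)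
  refine ⟨p, fun j => ((castSuccEquiv k).permCongr).symm ((π j * c).subtypePerm (fun x => (hiff j x).symm)), ?_⟩
  funext j
  have hext : extPerm (((castSuccEquiv k).permCongr).symm ((π j * c).subtypePerm (fun x => (hiff j x).symm)))
      = π j * c := by
    apply Equiv.ext
    intro x
    by_cases hx : x = Fin.last k
    · subst hx
      rw [extPerm_last, hρlast j]
    · conv_lhs => rw [← Fin.castSucc_castPred x hx]
      rw [extPerm_castSucc]
      simp only [Equiv.permCongr_symm, Equiv.permCongr_apply, Equiv.symm_symm]
      rw [show (castSuccEquiv k) (Fin.castPred x hx) =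
        ⟨x, hx⟩ from Subtype.ext (Fin.castSucc_castPred x hx)]
      rw [Equiv.Perm.subtypePerm_apply]
      exact Fin.castSucc_castPred ((π j * c) x) (hρne j x hx)
  show extPerm (((castSuccEquiv k).permCongr).symm ((π j * c).subtypePerm (fun x => (hiff j x).symm))) * c = π j
  rw [hext, hc, mul_assoc, Equiv.swap_mul_self, mul_one]

end MainComp
section BigLemma

variable {d : ℕ}

lemma map_alignMap_cayley (hd : Odd d) (hd0 : 0 < d) (k : ℕ) :
    ExteriorAlgebra.map (alignMap d k) (cayley d (k + 1)) =
      (k + 1) • (ExteriorAlgebra.map (inclMap (Nat.le_succ k)) (cayley d k) *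
        ExteriorAlgebra.ι ℂ (eb (fun _ => Fin.last k))) := by
  rw [cayley, map_sum]
  simp only [map_zsmul, ExteriorAlgebra.map_apply_ιMulti]
  rw [← Finset.sum_filter_add_sum_filter_not Finset.univ GoodT]
  have hbad : (∑ π ∈ Finset.univ.filter (fun π => ¬ GoodT π),
      (((∏ j, Equiv.Perm.sign (π j) : ℤˣ) : ℤ) •
        ExteriorAlgebra.ιMulti ℂ (k + 1)
          ((alignMap d k) ∘ (fun i => eb (d := d) (fun j => π j i))))) = 0 := by
    apply Finset.sum_eq_zero
    intro π hπ
    rw [Finset.mem_filter] at hπ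
    obtain ⟨i, hi⟩ := not_forall.mp hπ.2
    rw [AlternatingMap.map_coord_zero _ i (alignMap_eb_of_not _ hi), smul_zero]
  rw [hbad, add_zero]
  have hgoodterm : ∀ π ∈ Finset.univ.filter (GoodT (d := d) (k := k)),
      (((∏ j, Equiv.Perm.sign (π j) : ℤˣ) : ℤ) •
        ExteriorAlgebra.ιMulti ℂ (k + 1)
          ((alignMap d k) ∘ (fun i => eb (d := d) (fun j => π j i)))) =
      (((∏ j, Equiv.Perm.sign (π j) : ℤˣ) : ℤ) •
        ExteriorAlgebra.ιMulti ℂ (k + 1) (fun i => eb (d := d) (fun j => π j i))) := by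
    intro π hπ
    rw [Finset.mem_filter] at hπ
    exact congrArg _ (congrArg _ (funext fun i => alignMap_eb_of _ (hπ.2 i)))
  rw [Finset.sum_congr rfl hgoodterm]
  have hbij : (∑ π ∈ Finset.univ.filter (GoodT (d := d) (k := k)),
      (((∏ j, Equiv.Perm.sign (π j) : ℤˣ) : ℤ) •
        ExteriorAlgebra.ιMulti ℂ (k + 1) (fun i => eb (d := d) (fun j => π j i)))) =
      ∑ x : Fin (k + 1) × (Fin d → Equiv.Perm (Fin k)),
        (((∏ j, Equiv.Perm.sign (PhiT x.1 x.2 j) : ℤˣ) : ℤ) •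
          ExteriorAlgebra.ιMulti ℂ (k + 1)
            (fun i => eb (d := d) (fun j => PhiT x.1 x.2 j i))) := by
    refine (Finset.sum_bij (fun x _ => PhiT x.1 x.2) ?_ ?_ ?_ ?_).symm
    · intro x _
      exact Finset.mem_filter.mpr ⟨Finset.mem_univ _, PhiT_good _ _⟩
    · intro a _ b _ hab
      obtain ⟨h1, h2⟩ := PhiT_inj hd0 _ _ _ _ hab
      exact Prod.ext h1 h2
    · intro π hπ
      obtain ⟨p, σ, h⟩ := PhiT_surj hd0 π (Finset.mem_filter.mp hπ).2
      exact ⟨(p, σ), Finset.mem_univ _, h⟩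
    · intro x _
      rfl
  rw [hbij]
  have hterm : ∀ x : Fin (k + 1) × (Fin d → Equiv.Perm (Fin k)),
      (((∏ j, Equiv.Perm.sign (PhiT x.1 x.2 j) : ℤˣ) : ℤ) •
        ExteriorAlgebra.ιMulti ℂ (k + 1)
          (fun i => eb (d := d) (fun j => PhiT x.1 x.2 j i))) =
      (((∏ j, Equiv.Perm.sign (x.2 j) : ℤˣ) : ℤ) •
        (ExteriorAlgebra.map (inclMap (Nat.le_succ k))
            (ExteriorAlgebra.ιMulti ℂ k (fun i => eb (d := d) (fun j => x.2 j i))) *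
          ExteriorAlgebra.ι ℂ (eb (d := d) (fun _ => Fin.last k)))) := by
    intro x
    exact term_swap hd x.1 x.2
  rw [Finset.sum_congr rfl (fun x _ => hterm x)]
  rw [Fintype.sum_prod_type]
  dsimp only
  rw [Finset.sum_const, Finset.card_univ, Fintype.card_fin]
  congr 1
  rw [cayley, map_sum, Finset.sum_mul]
  apply Finset.sum_congr rfl
  intro σ _
  rw [map_zsmul, smul_mul_assoc]

end BigLemma
section Step

lemma map_neg_cayley (d k : ℕ) :
    ExteriorAlgebra.map (-LinearMap.id : Tens d k →ₗ[ℂ] Tens d k) (cayley d k) =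
      ((-1 : ℂ) ^ k) • cayley d k := by
  rw [cayley, map_sum, Finset.smul_sum]
  apply Finset.sum_congr rfl
  intro π _
  rw [map_zsmul, ExteriorAlgebra.map_apply_ιMulti]
  have hfam : ((-LinearMap.id : Tens d k →ₗ[ℂ] Tens d k) ∘
      (fun i => eb (d := d) (fun j => π j i))) =
      fun i => (-1 : ℂ) • eb (d := d) (fun j => π j i) := by
    funext i
    simp
  rw [hfam]
  have := MultilinearMap.map_smul_univ
    (ExteriorAlgebra.ιMulti ℂ k (M := Tens d k)).toMultilinearMap
    (fun _ => (-1 : ℂ)) (fun i => eb (d := d) (fun j => π j i))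
  simp only [AlternatingMap.coe_multilinearMap] at this
  rw [this, Finset.prod_const, Finset.card_univ, Fintype.card_fin, smul_comm]

lemma map_neg_map {R : Type*} [CommRing R] {M N : Type*} [AddCommGroup M] [Module R M]
    [AddCommGroup N] [Module R N] (F : N →ₗ[R] M) (z : ExteriorAlgebra R N) :
    ExteriorAlgebra.map (-LinearMap.id : M →ₗ[R] M) (ExteriorAlgebra.map F z) =
      ExteriorAlgebra.map F (ExteriorAlgebra.map (-LinearMap.id : N →ₗ[R] N) z) := by
  rw [← AlgHom.comp_apply, ← AlgHom.comp_apply, ExteriorAlgebra.map_comp_map,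
    ExteriorAlgebra.map_comp_map]
  have : ((-LinearMap.id : M →ₗ[R] M) ∘ₗ F) = F ∘ₗ (-LinearMap.id : N →ₗ[R] N) := by
    apply LinearMap.ext; intro x; simp
  rw [this]

set_option maxHeartbeats 1600000 in
lemma cayley_step (d k : ℕ) (hd : Odd d) (hd0 : 0 < d) (v : ExteriorAlgebra ℂ (Tens d k))
    (hv : cayley d k * v ≠ 0) :
    cayley d (k + 1) * ExteriorAlgebra.map (inclMap (Nat.le_succ k)) v ≠ 0 := by
  intro H
  have h0 : ExteriorAlgebra.map (alignMap d k)
      (cayley d (k + 1) * ExteriorAlgebra.map (inclMap (Nat.le_succ k)) v) = 0 := by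
    rw [H, map_zero]
  rw [map_mul, map_alignMap_cayley hd hd0] at h0
  have hcomp : ExteriorAlgebra.map (alignMap d k)
      (ExteriorAlgebra.map (inclMap (Nat.le_succ k)) v) =
      ExteriorAlgebra.map (inclMap (Nat.le_succ k)) v := by
    rw [← AlgHom.comp_apply, ExteriorAlgebra.map_comp_map, alignMap_comp_inclMap]
  rw [hcomp, smul_mul_assoc, mul_assoc, ← Nat.cast_smul_eq_nsmul ℂ] at h0
  have h1 : ExteriorAlgebra.map (inclMap (Nat.le_succ k)) (cayley d k) *
      (ExteriorAlgebra.ι ℂ (eb (fun _ => Fin.last k)) *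
        ExteriorAlgebra.map (inclMap (Nat.le_succ k)) v) = 0 := by
    rcases smul_eq_zero.mp h0 with h | h
    · exact absurd h (Nat.cast_ne_zero.mpr (Nat.succ_ne_zero k))
    · exact h
  have hφincl : ∀ m : Tens d k,
      (LinearMap.proj (R := ℂ) (fun _ => Fin.last k) : Module.Dual ℂ (Tens d (k + 1)))
        (inclMap (Nat.le_succ k) m) = 0 := by
    intro m
    simp only [LinearMap.proj_apply, inclMap, LinearMap.coe_mk, AddHom.coe_mk]
    rw [dif_neg]
    intro hcon
    exact absurd (hcon ⟨0, hd0⟩) (by simp [Fin.last])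
  have hφu : (LinearMap.proj (R := ℂ) (fun _ => Fin.last k) : Module.Dual ℂ (Tens d (k + 1)))
      (eb (fun _ => Fin.last k)) = 1 := by
    simp [eb]
  have hXc : CliffordAlgebra.contractLeft (Q := (0 : QuadraticForm ℂ (Tens d (k + 1))))
      (LinearMap.proj (R := ℂ) (fun _ => Fin.last k))
      (ExteriorAlgebra.map (inclMap (Nat.le_succ k)) (cayley d k)) = 0 :=
    contractLeft_map_eq_zero _ (inclMap (Nat.le_succ k)) hφincl (cayley d k)
  have hYc : CliffordAlgebra.contractLeft (Q := (0 : QuadraticForm ℂ (Tens d (k + 1))))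
      (LinearMap.proj (R := ℂ) (fun _ => Fin.last k))
      (ExteriorAlgebra.map (inclMap (Nat.le_succ k)) v) = 0 :=
    contractLeft_map_eq_zero _ (inclMap (Nat.le_succ k)) hφincl v
  have h3 := contract_key (R := ℂ) (M := Tens d (k + 1))
    (LinearMap.proj (fun _ => Fin.last k))
    (ExteriorAlgebra.map (inclMap (Nat.le_succ k)) (cayley d k))
    (ExteriorAlgebra.map (inclMap (Nat.le_succ k)) v)
    (eb (fun _ => Fin.last k))
    hXc hYc hφu h1
  rw [map_neg_map, map_neg_cayley, map_smul, smul_mul_assoc] at h3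
  have h5 : ExteriorAlgebra.map (inclMap (Nat.le_succ k)) (cayley d k) *
      ExteriorAlgebra.map (inclMap (Nat.le_succ k)) v = 0 := by
    rcases smul_eq_zero.mp h3 with h | h
    · exact absurd h (pow_ne_zero _ (neg_ne_zero.mpr one_ne_zero))
    · exact h
  rw [← map_mul] at h5
  exact hv (extMap_incl_injective (Nat.le_succ k) (by rw [h5, map_zero]))

end Step
/-- Let `d ≥ 3` be odd and `k < ℓ`. If `v ∈ ⋀ V_k` is a weight vector for
`GL(k)^{×d}` with `ω_{d,k} ∧ v ≠ 0`, then `ω_{d,ℓ} ∧ v ≠ 0` in `⋀ V_ℓ` (via the natural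
inclusion `⋀ V_k ⊆ ⋀ V_ℓ`). -/
theorem cayley_wedge_stable_nonzero (d k ℓ : ℕ) (hd : Odd d) (hd3 : 3 ≤ d) (hkl : k < ℓ)
    (lam : Fin d → Fin k → ℕ) (v : ExteriorAlgebra ℂ (Tens d k))
    (hw : IsWeightVector lam v) (hv : cayley d k * v ≠ 0) :
    cayley d ℓ * ExteriorAlgebra.map (inclMap (le_of_lt hkl)) v ≠ 0 := by
  have hd0 : 0 < d := by omega
  have main : ∀ ℓ', ∀ _ : k + 1 ≤ ℓ', ∀ h : k ≤ ℓ',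
      cayley d ℓ' * ExteriorAlgebra.map (inclMap h) v ≠ 0 := by
    intro ℓ' hℓ'
    induction ℓ', hℓ' using Nat.le_induction with
    | base =>
        intro h
        exact cayley_step d k hd hd0 v hv
    | succ n hn ih =>
        intro h
        have hkn : k ≤ n := by omega
        have step := cayley_step d n hd hd0 (ExteriorAlgebra.map (inclMap hkn) v) (ih hkn)
        rw [← AlgHom.comp_apply, ExteriorAlgebra.map_comp_map, inclMap_comp hkn] at step
        exact step
  exact main ℓ hkl (le_of_lt hkl)

end
end

section
/- Let $d \ge 3$ be odd, and let $b_d(n)$ denote the number of magic sets of magnitude $n$ in the cube $[2]^d$ (subsets of $[2]^d$ meeting every slice in exactly $n$ points). Then the sequence $\{b_d(n)\}_{n = 0, \ldots, 2^{d-1}}$ is symmetric ($b_d(n) = b_d(2^{d-1} - n)$) and unimodal. -/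
open ExteriorAlgebra

noncomputable section

/-- Points of the cube `[k]^d`. -/
abbrev Cube (d k : ℕ) : Type := Fin d → Fin k

/-- Lexicographic linear order on the points of the cube. -/
noncomputable instance cubeLinearOrder (d k : ℕ) : LinearOrder (Cube d k) :=
  letI : LinearOrder (Lex (∀ _ : Fin d, Fin k)) :=
    @Pi.Lex.linearOrder (Fin d) (fun _ => Fin k) inferInstance
      (inferInstanceAs (@WellFoundedLT (Fin d) instLTFin)) (fun _ => inferInstance)
  LinearOrder.lift' (toLex : (Fin d → Fin k) → Lex (∀ _ : Fin d, Fin k)) toLex.injective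

/-- The part of `T` lying in the `i`-th cslice of direction `ℓ`. -/
abbrev cslice {d k : ℕ} (T : Finset (Cube d k)) (ℓ : Fin d) (i : Fin k) : Finset (Cube d k) :=
  T.filter (fun x => x ℓ = i)

/-- `T` is a magic set of magnitude `n` in `[k]^d`: every cslice meets `T` in exactly `n` points. -/
def IsMagic {d k : ℕ} (n : ℕ) (T : Finset (Cube d k)) : Prop :=
  ∀ (ℓ : Fin d) (i : Fin k), (cslice T ℓ i).card = n

/-- `C : T → [n]` is a partial Latin hypercube of type `T`: it is bijective on every cslice. -/
def IsPLH {d k n : ℕ} (T : Finset (Cube d k)) (C : {x // x ∈ T} → Fin n) : Prop :=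
  ∀ (ℓ : Fin d) (i : Fin k),
    Function.Bijective (fun y : {y : {x // x ∈ T} // (y.1 : Cube d k) ℓ = i} => C y.1)

/-- Sign of a map `Fin n → Fin n`: the sign of the permutation if bijective, `0` otherwise. -/
noncomputable def permSign {n : ℕ} (f : Fin n → Fin n) : ℤ :=
  if h : Function.Bijective f then Equiv.Perm.sign (Equiv.ofBijective f h) else 0

/-- The sign of the `(ℓ,i)`-cslice permutation of `C`: values of `C` on the cslice read in
lexicographic order. -/
noncomputable def cslicePermSign {d k : ℕ} (n : ℕ) (T : Finset (Cube d k))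
    (C : {x // x ∈ T} → Fin n) (ℓ : Fin d) (i : Fin k) : ℤ :=
  if h : (cslice T ℓ i).card = n then
    permSign (fun p => C ⟨((cslice T ℓ i).orderIsoOfFin h p : Cube d k),
      (Finset.mem_filter.mp ((cslice T ℓ i).orderIsoOfFin h p).2).1⟩)
  else 0

/-- The sign of a partial Latin hypercube: product of the signs of all cslice permutations. -/
noncomputable def sgnPLH {d k : ℕ} (n : ℕ) (T : Finset (Cube d k))
    (C : {x // x ∈ T} → Fin n) : ℤ :=
  ∏ ℓ : Fin d, ∏ i : Fin k, cslicePermSign n T C ℓ i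

open scoped Classical in
/-- The `d`-dimensional Alon–Tarsi number `AT(T)`: the signed count of partial Latin
hypercubes of type `T` and magnitude `n`. -/
noncomputable def ATnum {d k : ℕ} (n : ℕ) (T : Finset (Cube d k)) : ℤ :=
  ∑ C : {x // x ∈ T} → Fin n, if IsPLH T C then sgnPLH n T C else 0

open scoped Classical in
/-- The direct sum of two magic sets. -/
noncomputable def dsum {d k₁ k₂ : ℕ} (T₁ : Finset (Cube d k₁)) (T₂ : Finset (Cube d k₂)) :
    Finset (Cube d (k₁ + k₂)) :=
  T₁.image (fun x j => Fin.castAdd k₂ (x j)) ∪ T₂.image (fun x j => Fin.natAdd k₁ (x j))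

open scoped Classical in
/-- The number of magic sets of magnitude `n` in `[2]^d`. -/
noncomputable def bnum (d n : ℕ) : ℕ :=
  (Finset.univ.filter (fun T : Finset (Cube d 2) => IsMagic n T)).card

namespace MagicAux

open Finset

variable {d : ℕ}

/-- Pointwise complement on the cube `[2]^d`. -/
def cc (x : Cube d 2) : Cube d 2 := fun j => x j + 1

lemma cc_cc (x : Cube d 2) : cc (cc x) = x := by
  funext j
  have h : ∀ a : Fin 2, a + 1 + 1 = a := by decide
  exact h (x j)

lemma cc_inj : Function.Injective (cc (d := d)) :=
  Function.Involutive.injective cc_cc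

lemma cc_apply (x : Cube d 2) (j : Fin d) : cc x j = x j + 1 := rfl

lemma slice_card_add (T : Finset (Cube d 2)) (ℓ : Fin d) (i : Fin 2) :
    (cslice T ℓ i).card + (cslice T ℓ (i + 1)).card = T.card := by
  classical
  have h2 : ∀ a : Fin 2, a = i + 1 ↔ ¬ (a = i) := by revert i; decide
  have hrw : cslice T ℓ (i + 1) = T.filter (fun x => ¬ (x ℓ = i)) := by
    ext x; simp [cslice, h2]
  rw [hrw, Finset.card_filter_add_card_filter_not]

lemma card_cslice_univ (hd : 0 < d) (ℓ : Fin d) (i : Fin 2) :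
    (cslice (Finset.univ : Finset (Cube d 2)) ℓ i).card = 2 ^ (d - 1) := by
  classical
  have hbij : (cslice (Finset.univ : Finset (Cube d 2)) ℓ i).card
      = (cslice (Finset.univ : Finset (Cube d 2)) ℓ (i + 1)).card := by
    apply Finset.card_bij (fun x _ => cc x)
    · intro a ha
      simp only [cslice, Finset.mem_filter, Finset.mem_univ, true_and] at ha ⊢
      rw [cc_apply, ha]
    · intro a _ b _ h; exact cc_inj h
    · intro b hb
      simp only [cslice, Finset.mem_filter, Finset.mem_univ, true_and] at hb ⊢
      refine ⟨cc b, ?_, cc_cc b⟩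
      rw [cc_apply, hb]
      have : ∀ j : Fin 2, j + 1 + 1 = j := by decide
      exact this i
  have hsum := slice_card_add (Finset.univ : Finset (Cube d 2)) ℓ i
  have huniv : (Finset.univ : Finset (Cube d 2)).card = 2 ^ d := by
    simp [Finset.card_univ, Fintype.card_fun]
  have h2 : 2 ^ d = 2 ^ (d - 1) + 2 ^ (d - 1) := by
    obtain ⟨e, rfl⟩ : ∃ e, d = e + 1 := ⟨d - 1, by omega⟩
    rw [Nat.add_sub_cancel, pow_succ]; omega
  omega

lemma magic_le {n : ℕ} {T : Finset (Cube d 2)} (hd : 0 < d) (h : IsMagic n T) :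
    n ≤ 2 ^ (d - 1) := by
  have hl : Fin d := ⟨0, hd⟩
  rw [← h hl 0, ← card_cslice_univ hd hl 0]
  exact Finset.card_le_card (Finset.filter_subset_filter _ (Finset.subset_univ T))

lemma magic_compl (hd : 0 < d) {n : ℕ} {T : Finset (Cube d 2)} (h : IsMagic n T) :
    IsMagic (2 ^ (d - 1) - n) Tᶜ := by
  intro ℓ i
  have hsub : cslice T ℓ i ⊆ cslice (Finset.univ : Finset (Cube d 2)) ℓ i :=
    Finset.filter_subset_filter _ (Finset.subset_univ T)
  have hrw : cslice Tᶜ ℓ i = cslice (Finset.univ : Finset (Cube d 2)) ℓ i \ cslice T ℓ i := by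
    ext x; simp only [cslice, Finset.mem_filter, Finset.mem_sdiff, Finset.mem_compl,
      Finset.mem_univ, true_and]; tauto
  rw [hrw, Finset.card_sdiff_of_subset hsub, card_cslice_univ hd, h]

lemma bnum_symm (hd : 0 < d) {n : ℕ} (hn : n ≤ 2 ^ (d - 1)) :
    bnum d n = bnum d (2 ^ (d - 1) - n) := by
  classical
  unfold bnum
  apply Finset.card_bij' (fun T _ => Tᶜ) (fun T _ => Tᶜ)
  · intro T _; exact compl_compl T
  · intro T _; exact compl_compl T
  · intro T hT
    simp only [Finset.mem_filter, Finset.mem_univ, true_and] at hT ⊢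
    exact magic_compl hd hT
  · intro T hT
    simp only [Finset.mem_filter, Finset.mem_univ, true_and] at hT ⊢
    have := magic_compl hd hT
    rwa [Nat.sub_sub_self hn] at this



/-- The antipodal-free part of `T`. -/
def Sing (T : Finset (Cube d 2)) : Finset (Cube d 2) :=
  T.filter (fun x => cc x ∉ T)

/-- Representatives (in the half-cube `x ℓ₀ = 0`) of antipodal pairs fully inside `T`. -/
def Dful (ℓ₀ : Fin d) (T : Finset (Cube d 2)) : Finset (Cube d 2) :=
  T.filter (fun x => cc x ∈ T ∧ x ℓ₀ = 0)

/-- Half-cube points whose antipodal pair avoids `S`. -/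
def FreeHalf (ℓ₀ : Fin d) (S : Finset (Cube d 2)) : Finset (Cube d 2) :=
  Finset.univ.filter (fun p => p ℓ₀ = 0 ∧ p ∉ S ∧ cc p ∉ S)

/-- Reconstruction of a set from its antipodal-free part and pair representatives. -/
def unfoldT (S F : Finset (Cube d 2)) : Finset (Cube d 2) :=
  S ∪ F ∪ F.image cc

lemma fin2_add_one_of_ne (a : Fin 2) (h : ¬ a = 0) : a + 1 = 0 := by revert a; decide

lemma fin2_add_one_ne (a : Fin 2) (h : a = 0) : ¬ (a + 1 = 0) := by revert a; decide

lemma recon (ℓ₀ : Fin d) (T : Finset (Cube d 2)) :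
    unfoldT (Sing T) (Dful ℓ₀ T) = T := by
  classical
  ext x
  simp only [unfoldT, Sing, Dful, Finset.mem_union, Finset.mem_image, Finset.mem_filter]
  constructor
  · rintro ((⟨h, _⟩ | ⟨h, _, _⟩) | ⟨y, ⟨_, hy, _⟩, rfl⟩) <;> first | exact h | exact hy
  · intro hx
    by_cases h1 : cc x ∈ T
    · by_cases h2 : x ℓ₀ = 0
      · exact Or.inl (Or.inr ⟨hx, h1, h2⟩)
      · refine Or.inr ⟨cc x, ⟨h1, ?_, ?_⟩, cc_cc x⟩
        · rw [cc_cc]; exact hx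
        · exact fin2_add_one_of_ne _ h2
    · exact Or.inl (Or.inl ⟨hx, h1⟩)

lemma Sing_free (T : Finset (Cube d 2)) : ∀ x ∈ Sing T, cc x ∉ Sing T := by
  intro x hx hmem
  simp only [Sing, Finset.mem_filter] at hx hmem
  exact hx.2 hmem.1

lemma Dful_subset (ℓ₀ : Fin d) (T : Finset (Cube d 2)) :
    Dful ℓ₀ T ⊆ FreeHalf ℓ₀ (Sing T) := by
  intro p hp
  simp only [Dful, Finset.mem_filter] at hp
  simp only [FreeHalf, Sing, Finset.mem_filter, Finset.mem_univ, true_and]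
  refine ⟨hp.2.2, fun h => h.2 hp.2.1, fun h => ?_⟩
  rw [cc_cc] at h
  exact h.2 hp.1

section Unfold

variable {ℓ₀ : Fin d} {S F : Finset (Cube d 2)}
  (hSfree : ∀ x ∈ S, cc x ∉ S) (hF : F ⊆ FreeHalf ℓ₀ S)

include hF in
lemma memF (p : Cube d 2) (hp : p ∈ F) : p ℓ₀ = 0 ∧ p ∉ S ∧ cc p ∉ S := by
  have := hF hp
  simpa [FreeHalf] using this

include hF in
lemma card_cslice_unfold (ℓ : Fin d) (i : Fin 2) :
    (cslice (unfoldT S F) ℓ i).card = (cslice S ℓ i).card + F.card := by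
  classical
  have hDSF : Disjoint S F := by
    rw [Finset.disjoint_right]
    exact fun a ha => (memF hF a ha).2.1
  have hDSc : Disjoint S (F.image cc) := by
    rw [Finset.disjoint_right]
    rintro a ha
    obtain ⟨p, hp, rfl⟩ := Finset.mem_image.mp ha
    exact (memF hF p hp).2.2
  have hDFc : Disjoint F (F.image cc) := by
    rw [Finset.disjoint_right]
    rintro a ha haF
    obtain ⟨p, hp, rfl⟩ := Finset.mem_image.mp ha
    exact fin2_add_one_ne _ (memF hF p hp).1 (memF hF _ haF).1
  have himg : cslice (F.image cc) ℓ i = (cslice F ℓ (i + 1)).image cc := by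
    ext y
    simp only [cslice, Finset.mem_filter, Finset.mem_image]
    constructor
    · rintro ⟨⟨p, hp, rfl⟩, hy⟩
      refine ⟨p, ⟨hp, ?_⟩, rfl⟩
      have h2 : ∀ a i : Fin 2, a + 1 = i → a = i + 1 := by decide
      exact h2 _ _ hy
    · rintro ⟨p, ⟨hp, hpl⟩, rfl⟩
      refine ⟨⟨p, hp, rfl⟩, ?_⟩
      have h2 : ∀ a i : Fin 2, a = i + 1 → a + 1 = i := by decide
      exact h2 _ _ hpl
  have hcsu : cslice (unfoldT S F) ℓ i
      = (cslice S ℓ i ∪ cslice F ℓ i) ∪ cslice (F.image cc) ℓ i := by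
    simp only [unfoldT, cslice, Finset.filter_union]
  rw [hcsu, Finset.card_union_of_disjoint, Finset.card_union_of_disjoint]
  · rw [himg, Finset.card_image_of_injective _ cc_inj]
    have := slice_card_add F ℓ i
    omega
  · exact Finset.disjoint_filter_filter hDSF
  · rw [Finset.disjoint_union_left]
    exact ⟨Finset.disjoint_filter_filter hDSc, Finset.disjoint_filter_filter hDFc⟩

include hF in
lemma magic_unfold {t : ℕ} (hS : IsMagic t S) : IsMagic (t + F.card) (unfoldT S F) := by
  intro ℓ i
  rw [card_cslice_unfold hF ℓ i, hS ℓ i]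

include hSfree hF in
lemma Sing_unfold : Sing (unfoldT S F) = S := by
  classical
  ext x
  simp only [Sing, unfoldT, Finset.mem_filter, Finset.mem_union, Finset.mem_image]
  constructor
  · rintro ⟨((hx | hx) | ⟨p, hp, rfl⟩), hcc⟩
    · exact hx
    · exact absurd (Or.inr ⟨x, hx, rfl⟩) hcc
    · exact absurd (Or.inl (Or.inr (by rw [cc_cc]; exact hp))) hcc
  · intro hx
    refine ⟨Or.inl (Or.inl hx), ?_⟩
    rintro ((h | h) | ⟨p, hp, hpe⟩)
    · exact hSfree x hx h
    · exact (memF hF _ h).2.2 (by rwa [cc_cc])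
    · exact (memF hF p hp).2.1 (by rw [cc_inj hpe]; exact hx)

include hSfree hF in
lemma Dful_unfold : Dful ℓ₀ (unfoldT S F) = F := by
  classical
  ext x
  simp only [Dful, unfoldT, Finset.mem_filter, Finset.mem_union, Finset.mem_image]
  constructor
  · rintro ⟨((hx | hx) | ⟨p, hp, rfl⟩), hcc, hl⟩
    · exfalso
      rcases hcc with (h | h) | ⟨p, hp, hpe⟩
      · exact hSfree x hx h
      · have h' := (memF hF _ h).2.2
        rw [cc_cc] at h'
        exact h' hx
      · exact (memF hF p hp).2.1 (by rw [cc_inj hpe]; exact hx)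
    · exact hx
    · exact absurd hl (fin2_add_one_ne _ (memF hF p hp).1)
  · intro hx
    exact ⟨Or.inl (Or.inr hx), Or.inr ⟨x, hx, rfl⟩, (memF hF x hx).1⟩

end Unfold



lemma card_FreeHalf (hd : 0 < d) (ℓ₀ : Fin d) {S : Finset (Cube d 2)}
    (hSfree : ∀ x ∈ S, cc x ∉ S) :
    (FreeHalf ℓ₀ S).card + S.card = 2 ^ (d - 1) := by
  classical
  have hbase : cslice (Finset.univ : Finset (Cube d 2)) ℓ₀ 0
      = Finset.univ.filter (fun p : Cube d 2 => p ℓ₀ = 0) := rfl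
  have hsplit : (FreeHalf ℓ₀ S).card
      + ((Finset.univ : Finset (Cube d 2)).filter
          (fun p => p ℓ₀ = 0 ∧ (p ∈ S ∨ cc p ∈ S))).card
      = 2 ^ (d - 1) := by
    rw [← card_cslice_univ hd ℓ₀ 0]
    have h1 : FreeHalf ℓ₀ S
        = (cslice (Finset.univ : Finset (Cube d 2)) ℓ₀ 0).filter
            (fun p => ¬ (p ∈ S ∨ cc p ∈ S)) := by
      ext p
      simp only [FreeHalf, cslice, Finset.mem_filter, Finset.mem_univ, true_and]
      tauto
    have h2 : (Finset.univ : Finset (Cube d 2)).filter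
          (fun p => p ℓ₀ = 0 ∧ (p ∈ S ∨ cc p ∈ S))
        = (cslice (Finset.univ : Finset (Cube d 2)) ℓ₀ 0).filter
            (fun p => (p ∈ S ∨ cc p ∈ S)) := by
      ext p
      simp only [cslice, Finset.mem_filter, Finset.mem_univ, true_and]
    rw [h1, h2, add_comm, Finset.card_filter_add_card_filter_not]
  have hcard : ((Finset.univ : Finset (Cube d 2)).filter
      (fun p => p ℓ₀ = 0 ∧ (p ∈ S ∨ cc p ∈ S))).card = S.card := by
    symm
    apply Finset.card_bij (fun x _ => if x ℓ₀ = 0 then x else cc x)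
    · intro a ha
      simp only [Finset.mem_filter, Finset.mem_univ, true_and]
      by_cases h : a ℓ₀ = 0
      · simp only [if_pos h]
        exact ⟨h, Or.inl ha⟩
      · simp only [if_neg h]
        refine ⟨fin2_add_one_of_ne _ h, Or.inr ?_⟩
        rw [cc_cc]; exact ha
    · intro x hx y hy heq
      split_ifs at heq with h1 h2 h2
      · exact heq
      · exact absurd (heq ▸ hx) (hSfree y hy)
      · exact absurd (heq.symm ▸ hy) (hSfree x hx)
      · exact cc_inj heq
    · intro q hq
      simp only [Finset.mem_filter, Finset.mem_univ, true_and] at hq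
      obtain ⟨hq0, hqS | hqS⟩ := hq
      · exact ⟨q, hqS, by rw [if_pos hq0]⟩
      · refine ⟨cc q, hqS, ?_⟩
        have hne : ¬ (cc q ℓ₀ = 0) := fin2_add_one_ne _ hq0
        simp only [if_neg hne]
        exact cc_cc q
  rw [← hcard]
  exact hsplit

lemma card_of_magic (ℓ₀ : Fin d) {t : ℕ} {S : Finset (Cube d 2)} (hS : IsMagic t S) :
    S.card = t + t := by
  have := slice_card_add S ℓ₀ 0
  rw [hS ℓ₀ 0, hS ℓ₀ (0 + 1)] at this
  omega

open scoped Classical in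
/-- Fiber of the magic sets of magnitude `n` over a given antipodal-free part `S`. -/
noncomputable def fib (ℓ₀ : Fin d) (n : ℕ) (S : Finset (Cube d 2)) :
    Finset (Finset (Cube d 2)) :=
  Finset.univ.filter (fun T => IsMagic n T ∧ Sing T = S)

lemma fib_card (hd : 0 < d) (ℓ₀ : Fin d) {n t : ℕ} {S : Finset (Cube d 2)}
    (hSfree : ∀ x ∈ S, cc x ∉ S) (hS : IsMagic t S) (htn : t ≤ n) :
    (fib ℓ₀ n S).card = Nat.choose (2 ^ (d - 1) - (t + t)) (n - t) := by
  classical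
  have hfh : (FreeHalf ℓ₀ S).card = 2 ^ (d - 1) - (t + t) := by
    have h1 := card_FreeHalf hd ℓ₀ hSfree
    have h2 := card_of_magic ℓ₀ hS
    omega
  rw [← hfh, ← Finset.card_powersetCard]
  apply Finset.card_bij (fun T _ => Dful ℓ₀ T)
  · intro T hT
    simp only [fib, Finset.mem_filter, Finset.mem_univ, true_and] at hT
    obtain ⟨hTm, hTs⟩ := hT
    rw [Finset.mem_powersetCard]
    constructor
    · rw [← hTs]; exact Dful_subset ℓ₀ T
    · have hDsub : Dful ℓ₀ T ⊆ FreeHalf ℓ₀ S := hTs ▸ Dful_subset ℓ₀ T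
      have hcs := card_cslice_unfold (S := S) (F := Dful ℓ₀ T) hDsub ℓ₀ 0
      rw [show unfoldT S (Dful ℓ₀ T) = T from by rw [← hTs]; exact recon ℓ₀ T] at hcs
      rw [hTm ℓ₀ 0, hS ℓ₀ 0] at hcs
      omega
  · intro T₁ hT₁ T₂ hT₂ heq
    simp only [fib, Finset.mem_filter, Finset.mem_univ, true_and] at hT₁ hT₂
    rw [← recon ℓ₀ T₁, ← recon ℓ₀ T₂, hT₁.2, hT₂.2, heq]
  · intro F hFm
    rw [Finset.mem_powersetCard] at hFm
    obtain ⟨hFsub, hFcard⟩ := hFm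
    refine ⟨unfoldT S F, ?_, ?_⟩
    · simp only [fib, Finset.mem_filter, Finset.mem_univ, true_and]
      constructor
      · have := magic_unfold hFsub hS
        rwa [hFcard, Nat.add_sub_cancel' htn] at this
      · exact Sing_unfold hSfree hFsub
    · exact Dful_unfold hSfree hFsub

lemma fib_mono (hd2 : 2 ≤ d) (ℓ₀ : Fin d) {n : ℕ} (hn : n + 1 ≤ 2 ^ (d - 2))
    (S : Finset (Cube d 2)) : (fib ℓ₀ n S).card ≤ (fib ℓ₀ (n + 1) S).card := by
  classical
  have hd : 0 < d := by omega
  rcases Finset.eq_empty_or_nonempty (fib ℓ₀ n S) with he | ⟨T, hT⟩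
  · simp [he]
  · simp only [fib, Finset.mem_filter, Finset.mem_univ, true_and] at hT
    obtain ⟨hTm, hTs⟩ := hT
    have hSfree : ∀ x ∈ S, cc x ∉ S := hTs ▸ Sing_free T
    have hDsub : Dful ℓ₀ T ⊆ FreeHalf ℓ₀ S := hTs ▸ Dful_subset ℓ₀ T
    set q := (Dful ℓ₀ T).card with hq
    have hmag : ∀ ℓ i, (cslice S ℓ i).card + q = n := by
      intro ℓ i
      have hcs := card_cslice_unfold (S := S) (F := Dful ℓ₀ T) hDsub ℓ i
      rw [show unfoldT S (Dful ℓ₀ T) = T from by rw [← hTs]; exact recon ℓ₀ T] at hcs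
      rw [hTm ℓ i] at hcs
      omega
    have hqn : q ≤ n := by have := hmag ℓ₀ 0; omega
    have hS : IsMagic (n - q) S := by
      intro ℓ i
      have := hmag ℓ i
      omega
    set t := n - q with ht
    have htn : t ≤ n := by omega
    rw [fib_card hd ℓ₀ hSfree hS htn, fib_card hd ℓ₀ hSfree hS (by omega : t ≤ n + 1)]
    have h2tle : t + t ≤ 2 ^ (d - 1) := by
      have h1 := card_FreeHalf hd ℓ₀ hSfree
      have h2 := card_of_magic ℓ₀ hS
      omega
    have hpow : 2 ^ (d - 1) = 2 ^ (d - 2) + 2 ^ (d - 2) := by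
      obtain ⟨e, he⟩ : ∃ e, d - 1 = e + 1 := ⟨d - 2, by omega⟩
      rw [he, pow_succ, show e = d - 2 from by omega]
      omega
    have hlt : n - t < (2 ^ (d - 1) - (t + t)) / 2 := by omega
    have := Nat.choose_le_succ_of_lt_half_left hlt
    rwa [show n + 1 - t = (n - t) + 1 from by omega]

lemma bnum_fib (ℓ₀ : Fin d) (n : ℕ) :
    bnum d n = ∑ S : Finset (Cube d 2), (fib ℓ₀ n S).card := by
  classical
  unfold bnum
  rw [Finset.card_eq_sum_card_fiberwise
    (f := Sing) (t := Finset.univ) (fun x _ => Finset.mem_univ _)]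
  apply Finset.sum_congr rfl
  intro S _
  congr 1
  ext T
  simp only [fib, Finset.mem_filter, Finset.mem_univ, true_and]

lemma bnum_step (hd2 : 2 ≤ d) {n : ℕ} (hn : n + 1 ≤ 2 ^ (d - 2)) :
    bnum d n ≤ bnum d (n + 1) := by
  have ℓ₀ : Fin d := ⟨0, by omega⟩
  rw [bnum_fib ℓ₀ n, bnum_fib ℓ₀ (n + 1)]
  exact Finset.sum_le_sum (fun S _ => fib_mono hd2 ℓ₀ hn S)

lemma bnum_mono (hd2 : 2 ≤ d) : ∀ b a : ℕ, a ≤ b → b ≤ 2 ^ (d - 2) →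
    bnum d a ≤ bnum d b := by
  intro b
  induction b with
  | zero =>
    intro a ha _
    obtain rfl : a = 0 := by omega
    exact le_refl _
  | succ b ih =>
    intro a ha hb
    rcases Nat.eq_or_lt_of_le ha with rfl | hlt
    · exact le_refl _
    · exact (ih a (by omega) (by omega)).trans (bnum_step hd2 hb)

end MagicAux

/-- For odd `d ≥ 3`, the sequence counting magic sets of magnitude `n` in
`[2]^d` is symmetric and unimodal on `n = 0, …, 2^{d-1}`. -/
theorem magic_sets_symmetric_unimodal (d : ℕ) (hd : Odd d) (hd3 : 3 ≤ d) :
    (∀ n ≤ 2 ^ (d - 1), bnum d n = bnum d (2 ^ (d - 1) - n)) ∧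
    (∃ n₀ ≤ 2 ^ (d - 1),
      (∀ a b : ℕ, a ≤ b → b ≤ n₀ → bnum d a ≤ bnum d b) ∧
      (∀ a b : ℕ, n₀ ≤ a → a ≤ b → b ≤ 2 ^ (d - 1) → bnum d b ≤ bnum d a)) := by
  have hd0 : 0 < d := by omega
  have hd2 : 2 ≤ d := by omega
  have hpow : 2 ^ (d - 1) = 2 ^ (d - 2) + 2 ^ (d - 2) := by
    obtain ⟨e, he⟩ : ∃ e, d - 1 = e + 1 := ⟨d - 2, by omega⟩
    rw [he, pow_succ, show e = d - 2 from by omega]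
    omega
  constructor
  · intro n hn
    exact MagicAux.bnum_symm hd0 hn
  · refine ⟨2 ^ (d - 2), Nat.pow_le_pow_right (by norm_num) (by omega), ?_, ?_⟩
    · intro a b hab hb
      exact MagicAux.bnum_mono hd2 b a hab hb
    · intro a b ha hab hb
      have h1 : bnum d b = bnum d (2 ^ (d - 1) - b) := MagicAux.bnum_symm hd0 hb
      have h2 : bnum d a = bnum d (2 ^ (d - 1) - a) := MagicAux.bnum_symm hd0 (by omega)
      rw [h1, h2]
      exact MagicAux.bnum_mono hd2 _ _ (by omega) (by omega)

end
end
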